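/- arXiv:1604.00630 — 3 statements merged into one kernel-verified Lean document; each statement's English description precedes it below -/
import Mathlib

section
/- Let V and Ṽ be two smooth (or C¹) complete-enough vector fields on a manifold M, with flows X(s, X⁰) and X̃(s, X⁰) solving Ẋ = V(X), X(0) = X⁰ (respectively for Ṽ). Then for any t > 0 and initial condition X⁰ such that both flows exist on [0, t], one has X̃(t, X⁰) − X(t, X⁰) = ∫₀ᵗ (∂X̃/∂X⁰)(t − s, X(s, X⁰)) · (Ṽ − V)(X(s, X⁰)) ds, where ∂X̃/∂X⁰ denotes the derivative of the flow X̃ with respect to its initial condition. -/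
noncomputable section

open Set Metric Filter Asymptotics
open scoped Topology NNReal

section Aux

variable {E : Type*} [NormedAddCommGroup E] [NormedSpace ℝ E]

/-- A solution of an ODE with speed bounded by `C` inside `closedBall x₀ r`, starting
in the half ball, moves at speed at most `C` for times up to `r / (2*C)`. -/
lemma tube_lemma {f f' : ℝ → E} {x₀ : E} {r C : ℝ} (hC : 0 < C) (hr : 0 < r)
    (hf : ∀ u, HasDerivAt f (f' u) u)
    (hb : ∀ u, f u ∈ closedBall x₀ r → ‖f' u‖ ≤ C)
    (h0 : f 0 ∈ closedBall x₀ (r / 2)) :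
    ∀ τ ∈ Icc (0:ℝ) (r / (2 * C)), dist (f τ) (f 0) ≤ C * τ := by
  set δ := r / (2 * C) with hδ
  have hδpos : 0 < δ := by positivity
  have hcont : Continuous f := by
    have : Differentiable ℝ f := fun u => (hf u).differentiableAt
    exact this.continuous
  set s : Set ℝ := {τ | dist (f τ) (f 0) ≤ C * τ} with hs_def
  have hs_closed : IsClosed s := by
    apply isClosed_le
    · exact (hcont.dist continuous_const)
    · fun_prop
  have h0s : (0:ℝ) ∈ s := by simp [hs_def]
  have key : Icc (0:ℝ) δ ⊆ s := by
    apply (hs_closed.inter isClosed_Icc).Icc_subset_of_forall_exists_gt h0s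
    rintro x ⟨hxs, hx0, hxδ⟩ y hy
    -- `f x` is strictly inside the ball
    have hfx : dist (f x) x₀ < r := by
      have h1 : dist (f x) (f 0) ≤ C * x := hxs
      have h2 : dist (f 0) x₀ ≤ r / 2 := by simpa using h0
      have h3 : C * x < C * δ := by
        exact mul_lt_mul_of_pos_left hxδ hC
      have h4 : C * δ = r / 2 := by
        field_simp [hδ]
        rw [hδ]; field_simp
      calc dist (f x) x₀ ≤ dist (f x) (f 0) + dist (f 0) x₀ := dist_triangle _ _ _
        _ < r / 2 + r / 2 := by nlinarith
        _ = r := by ring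
    -- continuity: `f u` stays in the ball for `u` slightly beyond `x`
    have hev : ∀ᶠ u in 𝓝 x, dist (f u) x₀ < r := by
      have : ContinuousAt (fun u => dist (f u) x₀) x := by fun_prop
      exact this.eventually_lt continuousAt_const hfx
    rcases Metric.eventually_nhds_iff.mp hev with ⟨ε, hεpos, hε⟩
    set u := min y (x + ε / 2) with hu
    have hxu : x < u := lt_min hy (by linarith)
    have hball : ∀ w ∈ Icc x u, f w ∈ closedBall x₀ r := by
      intro w hw
      have : |w - x| < ε := by
        have h1 : w - x ≤ ε / 2 := by
          have := hw.2
          have : w ≤ x + ε / 2 := le_trans this (min_le_right _ _)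
          linarith
        have h2 : 0 ≤ w - x := by linarith [hw.1]
        rw [abs_of_nonneg h2]; linarith
      exact le_of_lt (hε (by simpa [Real.dist_eq] using this))
    -- mean value inequality on `[x, u]`
    have hmv : ‖f u - f x‖ ≤ C * ‖u - x‖ := by
      apply Convex.norm_image_sub_le_of_norm_hasDerivWithin_le
        (f' := f') (fun w hw => (hf w).hasDerivWithinAt)
        (fun w hw => hb w (hball w hw)) (convex_Icc x u)
        (left_mem_Icc.mpr hxu.le) (right_mem_Icc.mpr hxu.le)
    refine ⟨u, ?_, hxu, min_le_left _ _⟩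
    have h1 : dist (f u) (f 0) ≤ dist (f u) (f x) + dist (f x) (f 0) := dist_triangle _ _ _
    have h2 : dist (f u) (f x) ≤ C * (u - x) := by
      rw [dist_eq_norm]
      calc ‖f u - f x‖ ≤ C * ‖u - x‖ := hmv
        _ = C * (u - x) := by rw [Real.norm_eq_abs, abs_of_nonneg (by linarith)]
    show dist (f u) (f 0) ≤ C * u
    have hxs' : dist (f x) (f 0) ≤ C * x := hxs
    calc dist (f u) (f 0) ≤ C * (u - x) + C * x := by linarith
      _ = C * u := by ring
  exact fun τ hτ => key hτ

/-- Global uniqueness for ODEs with a locally Lipschitz field. -/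
lemma ode_unique {Wf : E → E} (hW : LocallyLipschitz Wf) {f g : ℝ → E}
    (hf : ∀ τ, HasDerivAt f (Wf (f τ)) τ) (hg : ∀ τ, HasDerivAt g (Wf (g τ)) τ)
    (h0 : f 0 = g 0) : f = g := by
  have hcf : Continuous f := by
    have : Differentiable ℝ f := fun u => (hf u).differentiableAt
    exact this.continuous
  have hcg : Continuous g := by
    have : Differentiable ℝ g := fun u => (hg u).differentiableAt
    exact this.continuous
  set S : Set ℝ := {τ | f τ = g τ} with hS
  have hclosed : IsClosed S := isClosed_eq hcf hcg
  have hopen : IsOpen S := by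
    rw [isOpen_iff_mem_nhds]
    intro τ₁ hτ₁
    have heq : f τ₁ = g τ₁ := hτ₁
    obtain ⟨K, U, hU, hlip⟩ := hW (f τ₁)
    obtain ⟨r, hrpos, hrU⟩ := Metric.mem_nhds_iff.mp hU
    have hfU : ∀ᶠ τ in 𝓝 τ₁, f τ ∈ ball (f τ₁) r ∧ g τ ∈ ball (f τ₁) r := by
      have h1 : Tendsto f (𝓝 τ₁) (𝓝 (f τ₁)) := hcf.continuousAt
      have h2 : Tendsto g (𝓝 τ₁) (𝓝 (f τ₁)) := heq ▸ hcg.continuousAt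
      exact (h1.eventually (ball_mem_nhds _ hrpos)).and
        (h2.eventually (ball_mem_nhds _ hrpos))
    obtain ⟨ε, hεpos, hε⟩ := Metric.eventually_nhds_iff.mp hfU
    have hloc := ODE_solution_unique_of_mem_Ioo
      (v := fun _ => Wf) (s := fun _ => ball (f τ₁) r)
      (K := K) (f := f) (g := g) (t₀ := τ₁) (a := τ₁ - ε) (b := τ₁ + ε)
      (fun _ _ => hlip.mono hrU)
      (by constructor <;> linarith) ?_ ?_ heq
    · filter_upwards [Metric.ball_mem_nhds τ₁ hεpos] with τ hτ
      have := hloc (by simpa [Real.ball_eq_Ioo] using hτ)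
      exact this
    · intro τ hτ
      have hτ' : dist τ τ₁ < ε := by
        rw [Real.dist_eq, abs_lt]
        constructor <;> [linarith [hτ.1]; linarith [hτ.2]]
      exact ⟨hf τ, (hε hτ').1⟩
    · intro τ hτ
      have hτ' : dist τ τ₁ < ε := by
        rw [Real.dist_eq, abs_lt]
        constructor <;> [linarith [hτ.1]; linarith [hτ.2]]
      exact ⟨hg τ, (hε hτ').2⟩
  have : S = univ := IsClopen.eq_univ ⟨hclosed, hopen⟩ ⟨0, h0⟩
  funext τ
  have : τ ∈ S := this ▸ mem_univ τ
  exact this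

end Aux

section Flow

variable {E : Type*} [NormedAddCommGroup E] [NormedSpace ℝ E]
variable {W : E → E} {Y : ℝ → E → E} {DY : ℝ → E → E →L[ℝ] E}

/-- Semigroup property of the flow. -/
lemma flow_add (hW : ContDiff ℝ 1 W) (hY0 : ∀ z, Y 0 z = z)
    (hYflow : ∀ τ z, HasDerivAt (fun τ' => Y τ' z) (W (Y τ z)) τ)
    (b a : ℝ) (z : E) : Y (b + a) z = Y b (Y a z) := by
  have key := ode_unique hW.locallyLipschitz
    (f := fun u => Y (u + a) z) (g := fun u => Y u (Y a z)) ?_ ?_ ?_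
  · exact congrFun key b
  · intro u
    have h1 : HasDerivAt (fun u' : ℝ => u' + a) 1 u := (hasDerivAt_id u).add_const a
    have := (hYflow (u + a) z).scomp u h1
    simpa [Function.comp_def] using this
  · intro u; exact hYflow u (Y a z)
  · simp [hY0]

/-- The key pseudolinearization identity: the vector field is carried by the
derivative of the flow. -/
lemma flow_vf_id (hW : ContDiff ℝ 1 W) (hY0 : ∀ z, Y 0 z = z)
    (hYflow : ∀ τ z, HasDerivAt (fun τ' => Y τ' z) (W (Y τ z)) τ)
    (hDY : ∀ τ z, HasFDerivAt (fun z' => Y τ z') (DY τ z) z)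
    (τ : ℝ) (z : E) : W (Y τ z) = DY τ z (W z) := by
  have heq : (fun u : ℝ => Y (τ + u) z) = fun u => Y τ (Y u z) := by
    funext u; exact flow_add hW hY0 hYflow τ u z
  have h1 : HasDerivAt (fun u : ℝ => Y (τ + u) z) (W (Y τ z)) 0 := by
    have hin : HasDerivAt (fun u : ℝ => τ + u) 1 0 := (hasDerivAt_id 0).const_add τ
    have := (hYflow (τ + 0) z).scomp 0 hin
    simpa [Function.comp_def] using this
  have h2 : HasDerivAt (fun u : ℝ => Y τ (Y u z)) (DY τ z (W z)) 0 := by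
    have := (hDY τ (Y 0 z)).comp_hasDerivAt 0 (hYflow 0 z)
    simpa [hY0, Function.comp_def] using this
  rw [heq] at h1
  exact h1.unique h2

/-- Chain rule for the derivative of the flow. -/
lemma DY_add (hW : ContDiff ℝ 1 W) (hY0 : ∀ z, Y 0 z = z)
    (hYflow : ∀ τ z, HasDerivAt (fun τ' => Y τ' z) (W (Y τ z)) τ)
    (hDY : ∀ τ z, HasFDerivAt (fun z' => Y τ z') (DY τ z) z)
    (b a : ℝ) (z : E) : DY (b + a) z = (DY b (Y a z)).comp (DY a z) := by
  have heq : (fun z' => Y (b + a) z') = fun z' => Y b (Y a z') := by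
    funext z'; exact flow_add hW hY0 hYflow b a z'
  have h1 : HasFDerivAt (fun z' => Y (b + a) z') ((DY b (Y a z)).comp (DY a z)) z := by
    rw [heq]
    exact (hDY b (Y a z)).comp z (hDY a z)
  exact (hDY (b + a) z).unique h1

/-- Local-in-time Lipschitz estimates for the flow. -/
lemma local_est (hW : ContDiff ℝ 1 W) (hY0 : ∀ z, Y 0 z = z)
    (hYflow : ∀ τ z, HasDerivAt (fun τ' => Y τ' z) (W (Y τ z)) τ)
    (x₀ : E) :
    ∃ δ > (0:ℝ), ∃ ρ > (0:ℝ), ∃ L ≥ (1:ℝ), ∃ Kc ≥ (0:ℝ),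
      ∀ (a b : E), a ∈ closedBall x₀ ρ → b ∈ closedBall x₀ ρ → ∀ τ : ℝ, |τ| ≤ δ →
        dist (Y τ a) (Y τ b) ≤ L * dist a b ∧
        ‖Y τ a - Y τ b - (a - b)‖ ≤ Kc * (dist a b * |τ|) := by
  obtain ⟨K, U, hU, hlipU⟩ := hW.locallyLipschitz x₀
  obtain ⟨r, hrpos, hrU⟩ := Metric.nhds_basis_closedBall.mem_iff.mp hU
  have hlip : LipschitzOnWith K W (closedBall x₀ r) := hlipU.mono hrU
  set C : ℝ := ‖W x₀‖ + K * r + 1 with hC_def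
  have hC : 0 < C := by positivity
  have hbound : ∀ y ∈ closedBall x₀ r, ‖W y‖ ≤ C := by
    intro y hy
    have h1 : dist (W y) (W x₀) ≤ K * dist y x₀ :=
      hlip.dist_le_mul y hy x₀ (mem_closedBall_self hrpos.le)
    have h2 : dist y x₀ ≤ r := mem_closedBall.mp hy
    have h3 : ‖W y‖ ≤ ‖W x₀‖ + dist (W y) (W x₀) := by
      rw [dist_eq_norm]
      have := norm_sub_norm_le (W y) (W x₀)
      linarith [norm_sub_norm_le (W y) (W x₀)]
    have h4 : (K:ℝ) * dist y x₀ ≤ K * r := by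
      have : (0:ℝ) ≤ K := K.coe_nonneg
      nlinarith
    rw [hC_def]; linarith
  set δ : ℝ := r / (2 * C) with hδ_def
  have hδpos : 0 < δ := by positivity
  have hCδ : C * δ = r / 2 := by rw [hδ_def]; field_simp
  -- trajectories starting in the half-ball stay in the ball for `|τ| ≤ δ`
  have tubeY : ∀ a ∈ closedBall x₀ (r / 2), ∀ τ : ℝ, |τ| ≤ δ → Y τ a ∈ closedBall x₀ r := by
    intro a ha τ hτ
    rcases le_or_gt 0 τ with h | h
    · have hstep := tube_lemma hC hrpos (f := fun u => Y u a) (f' := fun u => W (Y u a))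
        (fun u => hYflow u a) (fun u hu => hbound _ hu) (by simpa [hY0] using ha)
        τ ⟨h, by rwa [abs_of_nonneg h] at hτ⟩
      have h5 : dist (Y τ a) a ≤ C * τ := by simpa [hY0] using hstep
      have ha' : dist a x₀ ≤ r / 2 := mem_closedBall.mp ha
      have h3 : C * τ ≤ r / 2 := by
        rw [← hCδ]
        have hττ : τ ≤ δ := by rwa [abs_of_nonneg h] at hτ
        nlinarith
      have htri := dist_triangle (Y τ a) a x₀
      have hfin : dist (Y τ a) x₀ ≤ r := by
        calc dist (Y τ a) x₀ ≤ dist (Y τ a) a + dist a x₀ := htri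
          _ ≤ r / 2 + r / 2 := add_le_add (le_trans h5 h3) ha'
          _ = r := by ring
      exact mem_closedBall.mpr hfin
    · have hf : ∀ u : ℝ, HasDerivAt (fun u' => Y (-u') a) (-W (Y (-u) a)) u := by
        intro u
        have := (hYflow (-u) a).scomp u (hasDerivAt_neg u)
        simpa [Function.comp_def] using this
      have hstep := tube_lemma hC hrpos (f := fun u => Y (-u) a) (f' := fun u => -W (Y (-u) a))
        hf (fun u hu => by simpa using hbound _ hu) (by simpa [hY0] using ha)
        (-τ) ⟨by linarith, by rwa [abs_of_neg h] at hτ⟩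
      have h5 : dist (Y τ a) a ≤ C * (-τ) := by simpa [hY0] using hstep
      have ha' : dist a x₀ ≤ r / 2 := mem_closedBall.mp ha
      have h3 : C * (-τ) ≤ r / 2 := by
        rw [← hCδ]
        have hττ : -τ ≤ δ := by rw [abs_of_neg h] at hτ; linarith
        nlinarith
      have htri := dist_triangle (Y τ a) a x₀
      have hfin : dist (Y τ a) x₀ ≤ r := by
        calc dist (Y τ a) x₀ ≤ dist (Y τ a) a + dist a x₀ := htri
          _ ≤ r / 2 + r / 2 := add_le_add (le_trans h5 h3) ha'
          _ = r := by ring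
      exact mem_closedBall.mpr hfin
  set L : ℝ := Real.exp (K * δ) with hL_def
  have hL1 : 1 ≤ L := Real.one_le_exp (by positivity)
  -- Lipschitz estimate via Grönwall
  have lipY : ∀ (a b : E), a ∈ closedBall x₀ (r/2) → b ∈ closedBall x₀ (r/2) →
      ∀ τ : ℝ, |τ| ≤ δ → dist (Y τ a) (Y τ b) ≤ L * dist a b := by
    intro a b ha hb τ hτ
    rcases le_or_gt 0 τ with h | h
    · have hest := dist_le_of_trajectories_ODE_of_mem
        (v := fun _ => W) (s := fun _ => closedBall x₀ r) (K := K)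
        (f := fun u => Y u a) (g := fun u => Y u b) (a := 0) (b := δ) (δ := dist a b)
        (fun _ _ => hlip)
        (Continuous.continuousOn (by
          have : Differentiable ℝ (fun u => Y u a) := fun u => (hYflow u a).differentiableAt
          exact this.continuous))
        (fun u _ => (hYflow u a).hasDerivWithinAt)
        (fun u hu => tubeY a ha u (by rw [abs_of_nonneg hu.1]; exact hu.2.le))
        (Continuous.continuousOn (by
          have : Differentiable ℝ (fun u => Y u b) := fun u => (hYflow u b).differentiableAt
          exact this.continuous))
        (fun u _ => (hYflow u b).hasDerivWithinAt)
        (fun u hu => tubeY b hb u (by rw [abs_of_nonneg hu.1]; exact hu.2.le))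
        (by simp [hY0])
        τ ⟨h, by rwa [abs_of_nonneg h] at hτ⟩
      calc dist (Y τ a) (Y τ b) ≤ dist a b * Real.exp (K * (τ - 0)) := hest
        _ ≤ dist a b * L := by
            rw [hL_def]
            have h1 : (K:ℝ) * (τ - 0) ≤ K * δ := by
              have : τ ≤ δ := by rwa [abs_of_nonneg h] at hτ
              have : (0:ℝ) ≤ K := K.coe_nonneg
              nlinarith
            exact mul_le_mul_of_nonneg_left (Real.exp_le_exp.mpr h1) dist_nonneg
        _ = L * dist a b := mul_comm _ _
    · have hlipneg : LipschitzOnWith K (fun y => -W y) (closedBall x₀ r) := by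
        apply LipschitzOnWith.of_dist_le_mul
        intro y hy z hz
        simpa [dist_neg_neg] using hlip.dist_le_mul y hy z hz
      have hf : ∀ (c : E) (u : ℝ), HasDerivAt (fun u' => Y (-u') c) (-W (Y (-u) c)) u := by
        intro c u
        have := (hYflow (-u) c).scomp u (hasDerivAt_neg u)
        simpa [Function.comp_def] using this
      have hest := dist_le_of_trajectories_ODE_of_mem
        (v := fun _ y => -W y) (s := fun _ => closedBall x₀ r) (K := K)
        (f := fun u => Y (-u) a) (g := fun u => Y (-u) b) (a := 0) (b := δ) (δ := dist a b)
        (fun _ _ => hlipneg)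
        (Continuous.continuousOn (by
          have : Differentiable ℝ (fun u : ℝ => Y (-u) a) := fun u => (hf a u).differentiableAt
          exact this.continuous))
        (fun u _ => (hf a u).hasDerivWithinAt)
        (fun u hu => tubeY a ha (-u) (by rw [abs_neg, abs_of_nonneg hu.1]; exact hu.2.le))
        (Continuous.continuousOn (by
          have : Differentiable ℝ (fun u : ℝ => Y (-u) b) := fun u => (hf b u).differentiableAt
          exact this.continuous))
        (fun u _ => (hf b u).hasDerivWithinAt)
        (fun u hu => tubeY b hb (-u) (by rw [abs_neg, abs_of_nonneg hu.1]; exact hu.2.le))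
        (by simp [hY0])
        (-τ) ⟨by linarith, by rwa [abs_of_neg h] at hτ⟩
      simp only [neg_neg] at hest
      calc dist (Y τ a) (Y τ b) ≤ dist a b * Real.exp (K * (-τ - 0)) := hest
        _ ≤ dist a b * L := by
            rw [hL_def]
            have h1 : (K:ℝ) * (-τ - 0) ≤ K * δ := by
              have : -τ ≤ δ := by rw [abs_of_neg h] at hτ; linarith
              have : (0:ℝ) ≤ K := K.coe_nonneg
              nlinarith
            exact mul_le_mul_of_nonneg_left (Real.exp_le_exp.mpr h1) dist_nonneg
        _ = L * dist a b := mul_comm _ _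
  -- second-order estimate via the mean value inequality
  refine ⟨δ, hδpos, r/2, by positivity, L, hL1, K * L, by positivity, ?_⟩
  intro a b ha hb τ hτ
  refine ⟨lipY a b ha hb τ hτ, ?_⟩
  have habs : ∀ u ∈ uIcc (0:ℝ) τ, |u| ≤ δ := by
    intro u hu
    rw [Set.mem_uIcc] at hu
    rw [abs_le]
    rcases hu with ⟨h1, h2⟩ | ⟨h1, h2⟩
    · constructor <;> [linarith [abs_nonneg τ]; linarith [le_abs_self τ]]
    · constructor
      · have := neg_abs_le τ; linarith
      · linarith [abs_nonneg τ]
  have hD : ∀ u ∈ uIcc (0:ℝ) τ,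
      HasDerivWithinAt (fun u' => Y u' a - Y u' b) (W (Y u a) - W (Y u b)) (uIcc (0:ℝ) τ) u :=
    fun u _ => ((hYflow u a).sub (hYflow u b)).hasDerivWithinAt
  have hbd : ∀ u ∈ uIcc (0:ℝ) τ, ‖W (Y u a) - W (Y u b)‖ ≤ K * L * dist a b := by
    intro u hu
    have h1 : Y u a ∈ closedBall x₀ r := tubeY a ha u (habs u hu)
    have h2 : Y u b ∈ closedBall x₀ r := tubeY b hb u (habs u hu)
    rw [← dist_eq_norm]
    calc dist (W (Y u a)) (W (Y u b)) ≤ K * dist (Y u a) (Y u b) := hlip.dist_le_mul _ h1 _ h2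
      _ ≤ K * (L * dist a b) := by
          have : (0:ℝ) ≤ K := K.coe_nonneg
          nlinarith [lipY a b ha hb u (habs u hu)]
      _ = K * L * dist a b := by ring
  have hmv := Convex.norm_image_sub_le_of_norm_hasDerivWithin_le hD hbd (convex_uIcc 0 τ)
    left_mem_uIcc right_mem_uIcc
  have h0 : Y 0 a - Y 0 b = a - b := by rw [hY0, hY0]
  calc ‖Y τ a - Y τ b - (a - b)‖ = ‖(Y τ a - Y τ b) - (Y 0 a - Y 0 b)‖ := by rw [h0]
    _ ≤ K * L * dist a b * ‖τ - 0‖ := hmv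
    _ = K * L * (dist a b * |τ|) := by rw [sub_zero, Real.norm_eq_abs]; ring

/-- Uniform local estimate over a compact set. -/
lemma uniform_local_est (hW : ContDiff ℝ 1 W) (hY0 : ∀ z, Y 0 z = z)
    (hYflow : ∀ τ z, HasDerivAt (fun τ' => Y τ' z) (W (Y τ z)) τ)
    {Kc : Set E} (hKc : IsCompact Kc) :
    ∃ δ > (0:ℝ), ∃ ρ > (0:ℝ), ∃ L ≥ (1:ℝ),
      ∀ w ∈ Kc, ∀ (a b : E), a ∈ closedBall w ρ → b ∈ closedBall w ρ → ∀ τ : ℝ, |τ| ≤ δ →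
        dist (Y τ a) (Y τ b) ≤ L * dist a b := by
  rcases Kc.eq_empty_or_nonempty with hemp | hne
  · exact ⟨1, one_pos, 1, one_pos, 1, le_refl 1, by simp [hemp]⟩
  -- choose local data at every point
  have hloc : ∀ y : E, ∃ δρL : ℝ × ℝ × ℝ, 0 < δρL.1 ∧ 0 < δρL.2.1 ∧ 1 ≤ δρL.2.2 ∧
      ∀ (a b : E), a ∈ closedBall y δρL.2.1 → b ∈ closedBall y δρL.2.1 → ∀ τ : ℝ, |τ| ≤ δρL.1 →
        dist (Y τ a) (Y τ b) ≤ δρL.2.2 * dist a b := by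
    intro y
    obtain ⟨δ, hδ, ρ, hρ, L, hL, Kc', hKc', hest⟩ := local_est hW hY0 hYflow y
    exact ⟨(δ, ρ, L), hδ, hρ, hL, fun a b ha hb τ hτ => (hest a b ha hb τ hτ).1⟩
  choose D hD1 hD2 hD3 hD4 using hloc
  -- cover by balls of half radius
  obtain ⟨F, hFsub, hFcover⟩ := hKc.elim_nhds_subcover (fun y => ball y ((D y).2.1 / 2))
    (fun y _ => ball_mem_nhds y (by have := hD2 y; positivity))
  have hFne : F.Nonempty := by
    rcases hne with ⟨x, hx⟩
    rcases Set.mem_iUnion₂.mp (hFcover hx) with ⟨y, hyF, _⟩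
    exact ⟨y, hyF⟩
  refine ⟨F.inf' hFne (fun y => (D y).1), ?_, F.inf' hFne (fun y => (D y).2.1 / 2), ?_,
    F.sup' hFne (fun y => (D y).2.2), ?_, ?_⟩
  · rw [gt_iff_lt, Finset.lt_inf'_iff]
    exact fun y _ => hD1 y
  · rw [gt_iff_lt, Finset.lt_inf'_iff]
    intro y _
    have := hD2 y
    positivity
  · obtain ⟨y, hy⟩ := hFne
    exact le_trans (hD3 y) (Finset.le_sup' (fun y => (D y).2.2) hy)
  · intro w hw a b ha hb τ hτ
    rcases Set.mem_iUnion₂.mp (hFcover hw) with ⟨y, hyF, hwy⟩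
    have hwy' : dist w y < (D y).2.1 / 2 := mem_ball.mp hwy
    have hρy : F.inf' hFne (fun y => (D y).2.1 / 2) ≤ (D y).2.1 / 2 :=
      Finset.inf'_le _ hyF
    have ha' : a ∈ closedBall y (D y).2.1 := by
      rw [mem_closedBall]
      have h1 : dist a w ≤ F.inf' hFne (fun y => (D y).2.1 / 2) := mem_closedBall.mp ha
      calc dist a y ≤ dist a w + dist w y := dist_triangle _ _ _
        _ ≤ (D y).2.1 / 2 + (D y).2.1 / 2 := add_le_add (le_trans h1 hρy) hwy'.le
        _ = (D y).2.1 := by ring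
    have hb' : b ∈ closedBall y (D y).2.1 := by
      rw [mem_closedBall]
      have h1 : dist b w ≤ F.inf' hFne (fun y => (D y).2.1 / 2) := mem_closedBall.mp hb
      calc dist b y ≤ dist b w + dist w y := dist_triangle _ _ _
        _ ≤ (D y).2.1 / 2 + (D y).2.1 / 2 := add_le_add (le_trans h1 hρy) hwy'.le
        _ = (D y).2.1 := by ring
    have hτ' : |τ| ≤ (D y).1 := le_trans hτ (Finset.inf'_le _ hyF)
    have hLy : (D y).2.2 ≤ F.sup' hFne (fun y => (D y).2.2) := Finset.le_sup' (fun y => (D y).2.2) hyF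
    calc dist (Y τ a) (Y τ b) ≤ (D y).2.2 * dist a b := hD4 y a b ha' hb' τ hτ'
      _ ≤ F.sup' hFne (fun y => (D y).2.2) * dist a b :=
          mul_le_mul_of_nonneg_right hLy dist_nonneg

/-- Long-time Lipschitz estimate for the flow near a fixed initial point. -/
lemma long_lip (hW : ContDiff ℝ 1 W) (hY0 : ∀ z, Y 0 z = z)
    (hYflow : ∀ τ z, HasDerivAt (fun τ' => Y τ' z) (W (Y τ z)) τ)
    (z : E) (T : ℝ) (hT : 0 ≤ T) :
    ∃ ρ > (0:ℝ), ∃ M ≥ (1:ℝ),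
      ∀ (a b : E), a ∈ closedBall z ρ → b ∈ closedBall z ρ → ∀ τ ∈ Icc (0:ℝ) T,
        dist (Y τ a) (Y τ b) ≤ M * dist a b := by
  have hcont : Continuous (fun u => Y u z) := by
    have : Differentiable ℝ (fun u => Y u z) := fun u => (hYflow u z).differentiableAt
    exact this.continuous
  have hcomp : IsCompact ((fun u => Y u z) '' Icc 0 T) :=
    (isCompact_Icc).image hcont
  obtain ⟨δ, hδ, ρ₀, hρ₀, L, hL1, hest⟩ := uniform_local_est hW hY0 hYflow hcomp
  have hL0 : 0 < L := lt_of_lt_of_le one_pos hL1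
  -- induction on the number of time steps
  have main : ∀ m : ℕ, ∀ τ ∈ Icc (0:ℝ) T, τ ≤ m * δ →
      ∀ (a b : E), a ∈ closedBall z (ρ₀ / L ^ m) → b ∈ closedBall z (ρ₀ / L ^ m) →
        dist (Y τ a) (Y τ b) ≤ L ^ m * dist a b := by
    intro m
    induction m with
    | zero =>
      intro τ hτ hτm a b ha hb
      have hτ0 : τ = 0 := le_antisymm (by simpa using hτm) hτ.1
      subst hτ0
      simp [hY0]
    | succ m ih =>
      intro τ hτ hτm a b ha hb
      have hmono : closedBall z (ρ₀ / L ^ (m+1)) ⊆ closedBall z (ρ₀ / L ^ m) := by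
        apply closedBall_subset_closedBall
        apply div_le_div_of_nonneg_left hρ₀.le (by positivity)
        exact pow_le_pow_right₀ hL1 (Nat.le_succ m)
      rcases le_or_gt τ (m * δ) with hcase | hcase
      · have := ih τ hτ hcase a b (hmono ha) (hmono hb)
        calc dist (Y τ a) (Y τ b) ≤ L ^ m * dist a b := this
          _ ≤ L ^ (m+1) * dist a b :=
              mul_le_mul_of_nonneg_right (pow_le_pow_right₀ hL1 (Nat.le_succ m)) dist_nonneg
      · -- split time: τ = (τ - m δ) + m δ
        have hmδ : (0:ℝ) ≤ m * δ := by positivity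
        have hmδT : (m:ℝ) * δ ≤ T := le_trans hcase.le hτ.2
        have hw : Y (m * δ) z ∈ (fun u => Y u z) '' Icc 0 T :=
          Set.mem_image_of_mem _ ⟨hmδ, hmδT⟩
        have hIH := fun (c : E) (hc : c ∈ closedBall z (ρ₀ / L ^ (m+1))) =>
          ih (m * δ) ⟨hmδ, hmδT⟩ le_rfl c z (hmono hc)
            (mem_closedBall_self (by positivity))
        have haz : dist (Y (m * δ) a) (Y (m * δ) z) ≤ ρ₀ := by
          have h1 := hIH a ha
          have h2 : dist a z ≤ ρ₀ / L ^ (m+1) := mem_closedBall.mp ha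
          calc dist (Y (m*δ) a) (Y (m*δ) z) ≤ L ^ m * dist a z := h1
            _ ≤ L ^ m * (ρ₀ / L ^ (m+1)) :=
                mul_le_mul_of_nonneg_left h2 (by positivity)
            _ = ρ₀ / L := by field_simp; ring
            _ ≤ ρ₀ := by
                rw [div_le_iff₀ hL0]
                nlinarith
        have hbz : dist (Y (m * δ) b) (Y (m * δ) z) ≤ ρ₀ := by
          have h1 := hIH b hb
          have h2 : dist b z ≤ ρ₀ / L ^ (m+1) := mem_closedBall.mp hb
          calc dist (Y (m*δ) b) (Y (m*δ) z) ≤ L ^ m * dist b z := h1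
            _ ≤ L ^ m * (ρ₀ / L ^ (m+1)) :=
                mul_le_mul_of_nonneg_left h2 (by positivity)
            _ = ρ₀ / L := by field_simp; ring
            _ ≤ ρ₀ := by
                rw [div_le_iff₀ hL0]
                nlinarith
        have hu : |τ - m * δ| ≤ δ := by
          rw [abs_of_pos (by linarith)]
          have : τ ≤ (m+1) * δ := by push_cast at hτm ⊢; linarith
          linarith
        have hstep := hest (Y (m * δ) z) hw (Y (m * δ) a) (Y (m * δ) b)
          (mem_closedBall.mpr haz) (mem_closedBall.mpr hbz) (τ - m * δ) hu
        have hsg : ∀ c : E, Y (τ - m * δ) (Y (m * δ) c) = Y τ c := by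
          intro c
          rw [← flow_add hW hY0 hYflow (τ - m * δ) (m * δ) c]
          norm_num
        rw [hsg a, hsg b] at hstep
        have hab := ih (m * δ) ⟨hmδ, hmδT⟩ le_rfl a b (hmono ha) (hmono hb)
        calc dist (Y τ a) (Y τ b) ≤ L * dist (Y (m*δ) a) (Y (m*δ) b) := hstep
          _ ≤ L * (L ^ m * dist a b) := mul_le_mul_of_nonneg_left hab hL0.le
          _ = L ^ (m+1) * dist a b := by ring
  -- choose m large enough
  obtain ⟨m, hm⟩ := exists_nat_ge (T / δ)
  have hTm : T ≤ m * δ := by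
    rw [div_le_iff₀ hδ] at hm
    linarith
  refine ⟨ρ₀ / L ^ m, by positivity, L ^ m, one_le_pow₀ hL1, ?_⟩
  exact fun a b ha hb τ hτ => main m τ hτ (le_trans hτ.2 hTm) a b ha hb

/-- Derivative of `s ↦ Y (t - s) (c s)` along a differentiable curve `c`. -/
lemma flow_comp_hasDerivAt (hW : ContDiff ℝ 1 W) (hY0 : ∀ z, Y 0 z = z)
    (hYflow : ∀ τ z, HasDerivAt (fun τ' => Y τ' z) (W (Y τ z)) τ)
    (hDY : ∀ τ z, HasFDerivAt (fun z' => Y τ z') (DY τ z) z)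
    {c : ℝ → E} {v : E} {s t : ℝ} (hc : HasDerivAt c v s) :
    HasDerivAt (fun s' => Y (t - s') (c s')) (DY (t - s) (c s) (v - W (c s))) s := by
  set x₀ := c s with hx₀
  -- the derivative of the shifted curve at `0`
  have hc0 : HasDerivAt (fun h : ℝ => c (s + h)) v 0 := by
    have h1 : HasDerivAt (fun h : ℝ => s + h) 1 0 := (hasDerivAt_id 0).const_add s
    have := HasDerivAt.scomp (h := fun h : ℝ => s + h) 0 (by simpa using hc) h1
    simpa [Function.comp_def] using this
  obtain ⟨δ, hδ, ρ, hρ, L, hL, Kc, hKc, hest⟩ := local_est hW hY0 hYflow x₀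
  have hL0 : (0:ℝ) < L := lt_of_lt_of_le one_pos hL
  -- `F` is the flow-corrected curve
  set F : ℝ → E := fun h => Y (-h) (c (s + h)) with hF
  have hF0 : F 0 = x₀ := by simp [hF, hY0, hx₀]
  -- three little-o pieces
  have hevmem : ∀ᶠ h : ℝ in 𝓝 0,
      c (s + h) ∈ closedBall x₀ ρ ∧ x₀ + h • v ∈ closedBall x₀ ρ ∧ |(-h)| ≤ δ := by
    have h1 : Tendsto (fun h : ℝ => c (s + h)) (𝓝 0) (𝓝 x₀) := by
      have := hc0.continuousAt
      simpa [ContinuousAt] using this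
    have h2 : Tendsto (fun h : ℝ => x₀ + h • v) (𝓝 0) (𝓝 x₀) := by
      have : Continuous (fun h : ℝ => x₀ + h • v) := by fun_prop
      have h0 : x₀ + (0:ℝ) • v = x₀ := by simp
      simpa [ContinuousAt, h0] using this.continuousAt (x := (0:ℝ))
    have h3 : Tendsto (fun h : ℝ => |(-h)|) (𝓝 (0:ℝ)) (𝓝 (0:ℝ)) := by
      have hco : Continuous (fun h : ℝ => |(-h)|) := by fun_prop
      have := hco.continuousAt (x := (0:ℝ))
      simpa [ContinuousAt] using this
    have h4 : ∀ᶠ h : ℝ in 𝓝 0, |(-h)| ≤ δ := by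
      have : ∀ᶠ r : ℝ in 𝓝 (0:ℝ), r < δ := eventually_lt_nhds hδ
      exact (h3.eventually this).mono fun h hh => hh.le
    filter_upwards [h1.eventually (Metric.closedBall_mem_nhds x₀ hρ),
      h2.eventually (Metric.closedBall_mem_nhds x₀ hρ), h4] with h ha hb hc
    exact ⟨ha, hb, hc⟩
  have he : (fun h : ℝ => c (s + h) - x₀ - h • v) =o[𝓝 0] (fun h => h) := by
    have := hasDerivAt_iff_isLittleO.mp hc0
    simpa using this
  have hA1 : (fun h : ℝ => Y (-h) (c (s + h)) - Y (-h) (x₀ + h • v)) =o[𝓝 0] (fun h => h) := by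
    refine IsBigO.trans_isLittleO ?_ he
    rw [Asymptotics.isBigO_iff]
    refine ⟨L, ?_⟩
    filter_upwards [hevmem] with h ⟨hm1, hm2, hm3⟩
    have := (hest _ _ hm1 hm2 (-h) hm3).1
    rw [dist_eq_norm, dist_eq_norm] at this
    calc ‖Y (-h) (c (s + h)) - Y (-h) (x₀ + h • v)‖ ≤ L * ‖c (s + h) - (x₀ + h • v)‖ := this
      _ = L * ‖c (s + h) - x₀ - h • v‖ := by rw [sub_add_eq_sub_sub]
  have hA2 : (fun h : ℝ => Y (-h) (x₀ + h • v) - Y (-h) x₀ - h • v) =o[𝓝 0] (fun h => h) := by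
    have hsq : (fun h : ℝ => h * h) =o[𝓝 0] (fun h => h) := by
      have h1 : (fun h : ℝ => h) =o[𝓝 0] (fun _ => (1:ℝ)) :=
        (Asymptotics.isLittleO_one_iff ℝ).mpr tendsto_id
      have := h1.mul_isBigO (Asymptotics.isBigO_refl (fun h : ℝ => h) (𝓝 0))
      simpa using this
    refine IsBigO.trans_isLittleO ?_ hsq
    rw [Asymptotics.isBigO_iff]
    refine ⟨Kc * ‖v‖, ?_⟩
    filter_upwards [hevmem] with h ⟨hm1, hm2, hm3⟩
    have := (hest _ _ hm2 (mem_closedBall_self hρ.le) (-h) hm3).2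
    have harith : x₀ + h • v - x₀ = h • v := by abel
    rw [harith] at this
    have hdist : dist (x₀ + h • v) x₀ = |h| * ‖v‖ := by
      rw [dist_eq_norm]
      have : x₀ + h • v - x₀ = h • v := by abel
      rw [this, norm_smul, Real.norm_eq_abs]
    calc ‖Y (-h) (x₀ + h • v) - Y (-h) x₀ - h • v‖ ≤ Kc * (dist (x₀ + h • v) x₀ * |(-h)|) := this
      _ = Kc * ‖v‖ * (|h| * |h|) := by rw [hdist, abs_neg]; ring
      _ = Kc * ‖v‖ * ‖h * h‖ := by rw [Real.norm_eq_abs, abs_mul]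
  have hA3 : (fun h : ℝ => Y (-h) x₀ - x₀ + h • W x₀) =o[𝓝 0] (fun h => h) := by
    have h3 : HasDerivAt (fun h : ℝ => Y (-h) x₀) (-W x₀) 0 := by
      have := HasDerivAt.scomp (h := fun h : ℝ => -h) 0
        (by simpa using hYflow (-(0:ℝ)) x₀) (hasDerivAt_neg 0)
      simpa [hY0, Function.comp_def] using this
    have := hasDerivAt_iff_isLittleO.mp h3
    simp only [neg_zero, hY0, sub_zero] at this
    have heq : (fun h : ℝ => Y (-h) x₀ - x₀ + h • W x₀)
        = fun h : ℝ => Y (-h) x₀ - x₀ - h • (-W x₀) := by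
      funext h; rw [smul_neg]; abel
    rw [heq]
    simpa using this
  -- `F` has derivative `v - W x₀` at `0`
  have hFd : HasDerivAt F (v - W x₀) 0 := by
    rw [hasDerivAt_iff_isLittleO]
    have heq : (fun h : ℝ => F h - F 0 - (h - 0) • (v - W x₀))
        = fun h : ℝ => (Y (-h) (c (s + h)) - Y (-h) (x₀ + h • v))
            + (Y (-h) (x₀ + h • v) - Y (-h) x₀ - h • v)
            + (Y (-h) x₀ - x₀ + h • W x₀) := by
      funext h
      simp only [hF, hx₀, sub_zero, smul_sub, neg_zero, add_zero, hY0]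
      abel
    rw [heq]
    simpa using ((hA1.add hA2).add hA3)
  -- compose with the fixed-time flow map
  have hcomp : HasDerivAt (fun h : ℝ => Y (t - s) (F h)) (DY (t - s) x₀ (v - W x₀)) 0 := by
    have h1 : HasFDerivAt (fun z' => Y (t - s) z') (DY (t - s) x₀) (F 0) := by
      rw [hF0]; exact hDY (t - s) x₀
    exact h1.comp_hasDerivAt 0 hFd
  have hkey : ∀ h : ℝ, Y (t - s) (F h) = Y (t - (s + h)) (c (s + h)) := by
    intro h
    rw [hF, ← flow_add hW hY0 hYflow (t - s) (-h) (c (s + h))]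
    norm_num
    ring_nf
  have hcomp' : HasDerivAt (fun h : ℝ => Y (t - (s + h)) (c (s + h)))
      (DY (t - s) x₀ (v - W x₀)) 0 := by
    have heq : (fun h : ℝ => Y (t - s) (F h)) = fun h : ℝ => Y (t - (s + h)) (c (s + h)) :=
      funext hkey
    rwa [heq] at hcomp
  -- translate back to the point `s`
  have hshift : HasDerivAt (fun s' : ℝ => s' - s) 1 s := (hasDerivAt_id s).sub_const s
  have := HasDerivAt.scomp (h := fun s' : ℝ => s' - s) s (by simpa using hcomp') hshift
  simp only [one_smul] at this
  have heq : ((fun h : ℝ => Y (t - (s + h)) (c (s + h))) ∘ fun s' => s' - s)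
      = fun s' => Y (t - s') (c s') := by
    funext s'
    simp only [Function.comp_apply]
    ring_nf
  rw [heq] at this
  simpa [map_sub] using this

/-- Bound on the norm of the derivative of the flow from a Lipschitz estimate. -/
lemma DY_norm_le (hDY : ∀ τ z, HasFDerivAt (fun z' => Y τ z') (DY τ z) z)
    {z w : E} {ρ M τ : ℝ} (hM : 0 ≤ M) (hw : w ∈ ball z ρ)
    (hlip : ∀ a b : E, a ∈ closedBall z ρ → b ∈ closedBall z ρ →
      dist (Y τ a) (Y τ b) ≤ M * dist a b) :
    ‖DY τ w‖ ≤ M := by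
  apply (hDY τ w).le_of_lip' hM
  filter_upwards [isOpen_ball.mem_nhds hw] with x hx
  have := hlip x w (ball_subset_closedBall hx) (ball_subset_closedBall hw)
  rwa [dist_eq_norm, dist_eq_norm] at this

end Flow

open MeasureTheory


/-- Pseudolinearization identity (Lemma 5.1): if `X`, `Y` are the flows of the `C¹` vector
fields `V`, `W` on ℝⁿ, and `DY τ z` denotes the derivative (Jacobian) of the time-`τ` flow map
`z ↦ Y τ z` with respect to the initial condition, then for any `t > 0` and initial condition
`z₀`,
`Y t z₀ − X t z₀ = ∫₀ᵗ DY (t−s) (X s z₀) ((W − V)(X s z₀)) ds`. -/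
theorem flow_difference_integral {n : ℕ}
    (V W : EuclideanSpace ℝ (Fin n) → EuclideanSpace ℝ (Fin n))
    (X Y : ℝ → EuclideanSpace ℝ (Fin n) → EuclideanSpace ℝ (Fin n))
    (DY : ℝ → EuclideanSpace ℝ (Fin n) →
      (EuclideanSpace ℝ (Fin n) →L[ℝ] EuclideanSpace ℝ (Fin n)))
    (hV : ContDiff ℝ 1 V) (hW : ContDiff ℝ 1 W)
    (hX0 : ∀ z, X 0 z = z) (hY0 : ∀ z, Y 0 z = z)
    (hXflow : ∀ τ z, HasDerivAt (fun τ' => X τ' z) (V (X τ z)) τ)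
    (hYflow : ∀ τ z, HasDerivAt (fun τ' => Y τ' z) (W (Y τ z)) τ)
    (hDY : ∀ τ z, HasFDerivAt (fun z' => Y τ z') (DY τ z) z)
    (t : ℝ) (ht : 0 < t) (z₀ : EuclideanSpace ℝ (Fin n)) :
    Y t z₀ - X t z₀
      = ∫ s in (0:ℝ)..t, DY (t - s) (X s z₀) (W (X s z₀) - V (X s z₀)) := by
  set φ : ℝ → EuclideanSpace ℝ (Fin n) := fun s => Y (t - s) (X s z₀) with hφdef
  set g : ℝ → EuclideanSpace ℝ (Fin n) :=
    fun s => DY (t - s) (X s z₀) (V (X s z₀) - W (X s z₀)) with hgdef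
  have hφ : ∀ s : ℝ, HasDerivAt φ (g s) s := fun s =>
    flow_comp_hasDerivAt hW hY0 hYflow hDY (hXflow s z₀)
  -- measurability of the integrand
  have hmeas : Measurable g := by
    have hderiv_eq : deriv φ = g := funext fun s => (hφ s).deriv
    rw [← hderiv_eq]
    exact measurable_deriv φ
  -- continuity of the base curve
  have hXc : Continuous (fun s => X s z₀) := by
    have : Differentiable ℝ (fun s => X s z₀) := fun s => (hXflow s z₀).differentiableAt
    exact this.continuous
  -- local bounds on the operator norms
  have hloc : ∀ s₀ : ℝ, ∃ U ∈ 𝓝 s₀, ∃ M : ℝ, 1 ≤ M ∧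
      ∀ s ∈ U, s ∈ Icc 0 t → ‖DY (t - s) (X s z₀)‖ ≤ M := by
    intro s₀
    obtain ⟨ρ, hρ, M, hM, hlip⟩ := long_lip hW hY0 hYflow (X s₀ z₀) t ht.le
    have hU : (fun s => X s z₀) ⁻¹' (ball (X s₀ z₀) ρ) ∈ 𝓝 s₀ :=
      hXc.continuousAt.preimage_mem_nhds (ball_mem_nhds _ hρ)
    refine ⟨_, hU, M, hM, ?_⟩
    intro s hs hsI
    have hτ : t - s ∈ Icc 0 t := ⟨by linarith [hsI.2], by linarith [hsI.1]⟩
    exact DY_norm_le hDY (le_trans zero_le_one hM) hs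
      (fun a b ha hb => hlip a b ha hb (t - s) hτ)
  choose U hU M hM1 hM2 using hloc
  obtain ⟨F, hFsub, hFcov⟩ :=
    (isCompact_Icc (a := (0:ℝ)) (b := t)).elim_nhds_subcover U (fun s₀ _ => hU s₀)
  have hFne : F.Nonempty := by
    rcases Set.mem_iUnion₂.mp (hFcov (left_mem_Icc.mpr ht.le)) with ⟨i, hiF, _⟩
    exact ⟨i, hiF⟩
  set Mg : ℝ := F.sup' hFne M with hMgdef
  have hMg0 : 0 ≤ Mg := by
    obtain ⟨i, hi⟩ := hFne
    exact le_trans (le_trans zero_le_one (hM1 i)) (Finset.le_sup' M hi)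
  have hMg : ∀ s ∈ Icc (0:ℝ) t, ‖DY (t - s) (X s z₀)‖ ≤ Mg := by
    intro s hs
    rcases Set.mem_iUnion₂.mp (hFcov hs) with ⟨i, hiF, hi⟩
    exact le_trans (hM2 i s hi hs) (Finset.le_sup' M hiF)
  -- bound on the vector part
  have hVWcont : ContinuousOn (fun s => V (X s z₀) - W (X s z₀)) (Icc (0:ℝ) t) :=
    (((hV.continuous.comp hXc).sub (hW.continuous.comp hXc))).continuousOn
  obtain ⟨B, hB⟩ := (isCompact_Icc (a := (0:ℝ)) (b := t)).exists_bound_of_continuousOn hVWcont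
  have hB0 : 0 ≤ B := le_trans (norm_nonneg _) (hB 0 (left_mem_Icc.mpr ht.le))
  -- integrability
  have hint : IntervalIntegrable g volume 0 t := by
    apply IntervalIntegrable.mono_fun
      (intervalIntegrable_const (μ := volume) (a := (0:ℝ)) (b := t) (c := Mg * B))
      hmeas.aestronglyMeasurable
    rw [Filter.EventuallyLE, MeasureTheory.ae_restrict_iff' measurableSet_uIoc]
    filter_upwards with s hs
    have hsI : s ∈ Icc (0:ℝ) t := by
      rw [Set.uIoc_of_le ht.le] at hs
      exact Set.Ioc_subset_Icc_self hs
    have h1 := hMg s hsI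
    have h2 := hB s hsI
    calc ‖g s‖ ≤ ‖DY (t - s) (X s z₀)‖ * ‖V (X s z₀) - W (X s z₀)‖ :=
          ContinuousLinearMap.le_opNorm _ _
      _ ≤ Mg * B := mul_le_mul h1 h2 (norm_nonneg _) hMg0
      _ ≤ ‖Mg * B‖ := le_abs_self _
  -- the fundamental theorem of calculus
  have hftc := intervalIntegral.integral_eq_sub_of_hasDerivAt (f := φ) (f' := g)
    (fun s _ => hφ s) hint
  have hφt : φ t = X t z₀ := by simp [hφdef, sub_self, hY0]
  have hφ0 : φ 0 = Y t z₀ := by simp [hφdef, hX0]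
  have hneg : (fun s => DY (t - s) (X s z₀) (W (X s z₀) - V (X s z₀))) = fun s => -(g s) := by
    funext s
    rw [hgdef, ← map_neg, neg_sub]
  rw [hneg, intervalIntegral.integral_neg, hftc, hφt, hφ0, neg_sub]

end
end

section
/- Let n ≥ 3 and let α : S^{n−2} → ℝ be a continuous function satisfying α(Ŷ) ≥ C₀ > 0 for all unit vectors Ŷ in S^{n−2} ⊂ ℝ^{n−1}. Define for η' ∈ ℝ^{n−1} the function φ(η') = ∫_{S^{n−2}} exp(−|η'·Ŷ|²/(4c α(Ŷ))) dŶ, where c > 0 is a constant. Then there exist constants c₁, c₂ > 0 such that c₁ ⟨η'⟩^{−1} ≤ φ(η') ≤ c₂ for all η' ∈ ℝ^{n−1}, where ⟨η'⟩ = (1 + |η'|²)^{1/2}. In particular |η'| φ(η') is bounded below by a positive constant for |η'| ≥ 1. -/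
noncomputable section

open MeasureTheory
open scoped RealInnerProductSpace


open Metric Set
open scoped Pointwise ENNReal NNReal

set_option maxHeartbeats 1000000


lemma band_toSphere_lower (m : ℕ) (hm : 2 ≤ m)
    (e : EuclideanSpace ℝ (Fin m)) (he : ‖e‖ = 1) (δ : ℝ) (hδ0 : 0 < δ) (hδ1 : δ ≤ 1) :
    ENNReal.ofReal ((m : ℝ) * ((20 * Real.sqrt ((m:ℝ) - 1))⁻¹) ^ (m - 1) * δ)
      ≤ (volume : Measure (EuclideanSpace ℝ (Fin m))).toSphere
          {Y : sphere (0 : EuclideanSpace ℝ (Fin m)) 1 |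
            |⟪e, (Y : EuclideanSpace ℝ (Fin m))⟫| ≤ δ} := by
  have hm0 : 0 < m := lt_of_lt_of_le two_pos hm
  haveI : NeZero m := ⟨hm0.ne'⟩
  have hM1 : (1:ℝ) ≤ (m:ℝ) - 1 := by
    have : (2:ℝ) ≤ (m:ℝ) := by exact_mod_cast hm
    linarith
  have hM0 : (0:ℝ) < (m:ℝ) - 1 := by linarith
  have hsqM : (0:ℝ) < Real.sqrt ((m:ℝ) - 1) := Real.sqrt_pos.2 hM0
  set s : ℝ := (2 * Real.sqrt ((m:ℝ) - 1))⁻¹ with hs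
  have hs0 : 0 < s := by positivity
  set t : ℝ := (11/10) * s with ht
  have hts : t - s = (20 * Real.sqrt ((m:ℝ) - 1))⁻¹ := by
    rw [ht, hs]; field_simp; ring
  have hs2 : ((m:ℝ) - 1) * s ^ 2 = 1/4 := by
    rw [hs, mul_inv, sq]
    have : Real.sqrt ((m:ℝ)-1) * Real.sqrt ((m:ℝ)-1) = (m:ℝ) - 1 :=
      Real.mul_self_sqrt (le_of_lt hM0)
    field_simp
    nlinarith [this]
  have ht2 : ((m:ℝ) - 1) * t ^ 2 = 121/400 := by
    rw [ht]; nlinarith [hs2]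
  -- the band on the sphere
  have hA : True := trivial
  have hAmeas : MeasurableSet {Y : sphere (0 : EuclideanSpace ℝ (Fin m)) 1 | |⟪e, (Y : EuclideanSpace ℝ (Fin m))⟫| ≤ δ} := by
    have : IsClosed {Y : sphere (0 : EuclideanSpace ℝ (Fin m)) 1 | |⟪e, (Y : EuclideanSpace ℝ (Fin m))⟫| ≤ δ} := by
      have hcont : Continuous fun Y : sphere (0 : EuclideanSpace ℝ (Fin m)) 1 => |⟪e, (Y : EuclideanSpace ℝ (Fin m))⟫| :=
        (continuous_abs.comp ((innerSL ℝ e).continuous.comp continuous_subtype_val))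
      exact isClosed_le hcont continuous_const
    exact this.measurableSet
  -- the pi-type box
  set I : Fin m → Set ℝ := fun i => if i = 0 then Icc (-(δ/2)) (δ/2) else Icc s t with hI
  set S : Set (EuclideanSpace ℝ (Fin m)) := (MeasurableEquiv.toLp 2 (Fin m → ℝ)).symm ⁻¹' (Set.univ.pi I) with hS
  have hpiMeas : MeasurableSet (Set.univ.pi I) := by
    refine MeasurableSet.univ_pi fun i => ?_
    by_cases h : i = 0 <;> simp [hI, h]
  have hSmeas : MeasurableSet S :=
    (MeasurableEquiv.toLp 2 (Fin m → ℝ)).symm.measurable hpiMeas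
  have hvolS : volume S = ENNReal.ofReal δ * ENNReal.ofReal (t - s) ^ (m - 1) := by
    rw [hS, (EuclideanSpace.volume_preserving_symm_measurableEquiv_toLp (Fin m)).measure_preimage
      hpiMeas.nullMeasurableSet, volume_pi_pi]
    rw [← Finset.mul_prod_erase Finset.univ _ (Finset.mem_univ (0 : Fin m))]
    have h1 : volume (I 0) = ENNReal.ofReal δ := by
      simp only [hI, if_pos rfl, Real.volume_Icc]
      rw [show δ/2 - (-(δ/2)) = δ by ring]
    have h2 : ∀ i ∈ Finset.univ.erase (0 : Fin m), volume (I i) = ENNReal.ofReal (t - s) := by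
      intro i hi
      have : i ≠ 0 := (Finset.mem_erase.1 hi).1
      simp [hI, this, Real.volume_Icc]
    rw [h1, Finset.prod_congr rfl h2, Finset.prod_const,
      Finset.card_erase_of_mem (Finset.mem_univ _), Finset.card_univ, Fintype.card_fin]
  -- orthonormal basis with `b 0 = e`
  obtain ⟨b, hb⟩ : ∃ b : OrthonormalBasis (Fin m) ℝ (EuclideanSpace ℝ (Fin m)), b 0 = e := by
    have hcard : Module.finrank ℝ (EuclideanSpace ℝ (Fin m)) = Fintype.card (Fin m) := by
      simp [finrank_euclideanSpace_fin]
    haveI : Subsingleton (({0} : Set (Fin m))) := Set.subsingleton_singleton.coe_sort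
    have horth : Orthonormal ℝ (({0} : Set (Fin m)).restrict (fun _ => e)) := by
      refine ⟨fun i => he, fun i j hij => absurd (Subsingleton.elim i j) hij⟩
    obtain ⟨b, hb⟩ := horth.exists_orthonormalBasis_extension_of_card_eq hcard
    exact ⟨b, hb 0 rfl⟩
  set T : Set (EuclideanSpace ℝ (Fin m)) := ⇑b.repr ⁻¹' S with hT
  have hvolT : volume T = volume S :=
    b.measurePreserving_repr.measure_preimage hSmeas.nullMeasurableSet
  have hts0 : 0 ≤ t - s := by rw [hts]; positivity
  -- facts about elements of T
  have hTsub : T ⊆ Ioo (0:ℝ) 1 • ((↑) '' {Y : sphere (0 : EuclideanSpace ℝ (Fin m)) 1 | |⟪e, (Y : EuclideanSpace ℝ (Fin m))⟫| ≤ δ} : Set (EuclideanSpace ℝ (Fin m))) := by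
    intro x hx
    set y := b.repr x with hy
    have hyI : ∀ i, y i ∈ I i := by
      intro i
      have := Set.mem_preimage.1 hx
      exact (Set.mem_univ_pi.1 (Set.mem_preimage.1 this)) i
    have h0 : |y 0| ≤ δ / 2 := by
      have := hyI 0
      rw [hI] at this
      simp only [if_pos rfl, Set.mem_Icc] at this
      exact abs_le.2 this
    have hio : ∀ i : Fin m, i ≠ 0 → s ≤ y i ∧ y i ≤ t := by
      intro i hi
      have := hyI i
      rw [hI] at this
      simp only [if_neg hi, Set.mem_Icc] at this
      exact this
    have hcardE : (Finset.univ.erase (0 : Fin m)).card = m - 1 := by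
      rw [Finset.card_erase_of_mem (Finset.mem_univ _), Finset.card_univ, Fintype.card_fin]
    have hcastM : ((m - 1 : ℕ) : ℝ) = (m : ℝ) - 1 := by
      have := Nat.one_le_iff_ne_zero.2 hm0.ne'
      push_cast [Nat.cast_sub this]
      ring
    have hlow2 : ((m:ℝ) - 1) * s ^ 2 ≤ ∑ i ∈ Finset.univ.erase (0 : Fin m), y i ^ 2 := by
      have h := Finset.card_nsmul_le_sum (Finset.univ.erase (0:Fin m))
        (fun i => y i ^ 2) (s^2) (fun i hi =>
          pow_le_pow_left₀ hs0.le (hio i (Finset.mem_erase.1 hi).1).1 2)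
      rw [hcardE, nsmul_eq_mul, hcastM] at h
      exact h
    have hhigh2 : ∑ i ∈ Finset.univ.erase (0 : Fin m), y i ^ 2 ≤ ((m:ℝ) - 1) * t ^ 2 := by
      have h := Finset.sum_le_card_nsmul (Finset.univ.erase (0:Fin m))
        (fun i => y i ^ 2) (t^2) (fun i hi => by
          have hi' := hio i (Finset.mem_erase.1 hi).1
          exact pow_le_pow_left₀ (le_trans hs0.le hi'.1) hi'.2 2)
      rw [hcardE, nsmul_eq_mul, hcastM] at h
      exact h
    have hsum_split : ∑ i, y i ^ 2
        = y 0 ^ 2 + ∑ i ∈ Finset.univ.erase (0 : Fin m), y i ^ 2 :=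
      (Finset.add_sum_erase Finset.univ (fun i => y i ^ 2) (Finset.mem_univ 0)).symm
    have hy02 : y 0 ^ 2 ≤ 1/4 := by
      have h1 : y 0 ^ 2 ≤ (δ/2)^2 := by
        rw [← sq_abs]
        exact pow_le_pow_left₀ (abs_nonneg _) h0 2
      nlinarith
    have hsumlow : (1:ℝ)/4 ≤ ∑ i, y i ^ 2 := by
      rw [hsum_split]; linarith [hlow2, hs2, sq_nonneg (y 0)]
    have hsumhigh : ∑ i, y i ^ 2 ≤ 221/400 := by
      rw [hsum_split]; linarith [hhigh2, ht2, hy02]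
    have hny : ‖y‖ = Real.sqrt (∑ i, y i ^ 2) := by
      rw [EuclideanSpace.norm_eq]
      congr 1
      exact Finset.sum_congr rfl fun i _ => by
        rw [Real.norm_eq_abs, sq_abs]
    have hnx : ‖x‖ = Real.sqrt (∑ i, y i ^ 2) := by
      rw [← hny, hy, b.repr.norm_map]
    have hxlow : (1:ℝ)/2 ≤ ‖x‖ := by
      rw [hnx, show (1:ℝ)/2 = Real.sqrt (1/4) by
        rw [show (1/4:ℝ) = (1/2)^2 by norm_num, Real.sqrt_sq (by norm_num)]]
      exact Real.sqrt_le_sqrt hsumlow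
    have hxhigh : ‖x‖ < 1 := by
      rw [hnx]
      refine (Real.sqrt_lt' one_pos).2 ?_
      have h1 : (1:ℝ)^2 = 1 := one_pow 2
      linarith [hsumhigh]
    have hxne : ‖x‖ ≠ 0 := by positivity
    have hinner : ⟪e, x⟫ = y 0 := by
      rw [← hb, ← b.repr_apply_apply x 0, hy]
    have hmem1 : ‖x‖ ∈ Ioo (0:ℝ) 1 := ⟨by linarith, hxhigh⟩
    have hmem2 : ‖x‖⁻¹ • x ∈ ((↑) '' {Y : sphere (0 : EuclideanSpace ℝ (Fin m)) 1 | |⟪e, (Y : EuclideanSpace ℝ (Fin m))⟫| ≤ δ} : Set (EuclideanSpace ℝ (Fin m))) := by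
      refine (Set.mem_image _ _ _).2 ⟨⟨‖x‖⁻¹ • x, ?_⟩, ?_, rfl⟩
      · rw [mem_sphere_zero_iff_norm, norm_smul, norm_inv, norm_norm,
          inv_mul_cancel₀ hxne]
      · simp only [Set.mem_setOf_eq]
        rw [real_inner_smul_right, abs_mul, hinner, abs_of_nonneg (by positivity : (0:ℝ) ≤ ‖x‖⁻¹)]
        have hinv2 : ‖x‖⁻¹ ≤ 2 := by
          rw [inv_le_comm₀ (by linarith) (by norm_num)]
          linarith
        calc ‖x‖⁻¹ * |y 0| ≤ 2 * (δ/2) :=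
              mul_le_mul hinv2 h0 (abs_nonneg _) (by norm_num)
          _ = δ := by ring
    have hxeq : ‖x‖ • (‖x‖⁻¹ • x) = x := by
      rw [smul_smul, mul_inv_cancel₀ hxne, one_smul]
    exact hxeq ▸ Set.smul_mem_smul hmem1 hmem2
  -- conclude
  have hkey : (m : ℝ≥0∞) * volume T
      = ENNReal.ofReal ((m : ℝ) * ((20 * Real.sqrt ((m:ℝ) - 1))⁻¹) ^ (m - 1) * δ) := by
    rw [hvolT, hvolS, ← hts, ← ENNReal.ofReal_pow hts0,
      ← ENNReal.ofReal_natCast m, ← ENNReal.ofReal_mul (by positivity),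
      ← ENNReal.ofReal_mul (by positivity)]
    ring_nf
  calc ENNReal.ofReal ((m : ℝ) * ((20 * Real.sqrt ((m:ℝ) - 1))⁻¹) ^ (m - 1) * δ)
      = (m : ℝ≥0∞) * volume T := hkey.symm
    _ ≤ (m : ℝ≥0∞) * volume (Ioo (0:ℝ) 1 • ((↑) '' {Y : sphere (0 : EuclideanSpace ℝ (Fin m)) 1 | |⟪e, (Y : EuclideanSpace ℝ (Fin m))⟫| ≤ δ} : Set (EuclideanSpace ℝ (Fin m)))) :=
        mul_le_mul_right (measure_mono hTsub) _
    _ = (volume : Measure (EuclideanSpace ℝ (Fin m))).toSphere {Y : sphere (0 : EuclideanSpace ℝ (Fin m)) 1 | |⟪e, (Y : EuclideanSpace ℝ (Fin m))⟫| ≤ δ} := by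
        rw [Measure.toSphere_apply' volume hAmeas]
        norm_num [finrank_euclideanSpace_fin]

/-- Two-sided bounds for the spherical average of Gaussians
`φ(η') = ∫_{S^{n−2}} exp(−|η'·Y|²/(4c α(Y))) dY` (where `S^{n−2}` is the unit sphere in
`ℝ^{n−1}`, with the standard surface measure, and `α ≥ C₀ > 0` is continuous):
`c₁ ⟨η'⟩⁻¹ ≤ φ(η') ≤ c₂`, and in particular `|η'| φ(η')` is bounded below by a positive
constant for `|η'| ≥ 1`. -/
theorem spherical_gaussian_average_bounds (n : ℕ) (hn : 3 ≤ n) (c C₀ : ℝ)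
    (hc : 0 < c) (hC₀ : 0 < C₀)
    (α : Metric.sphere (0 : EuclideanSpace ℝ (Fin (n - 1))) 1 → ℝ)
    (hα : Continuous α) (hαC : ∀ Y, C₀ ≤ α Y) :
    ∃ c₁ c₂ c₃ : ℝ, 0 < c₁ ∧ 0 < c₂ ∧ 0 < c₃ ∧
      ∀ η : EuclideanSpace ℝ (Fin (n - 1)),
        (c₁ * (Real.sqrt (1 + ‖η‖ ^ 2))⁻¹
            ≤ ∫ Y, Real.exp (-⟪η, (Y : EuclideanSpace ℝ (Fin (n - 1)))⟫ ^ 2 / (4 * c * α Y))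
                ∂((volume : Measure (EuclideanSpace ℝ (Fin (n - 1)))).toSphere))
        ∧ (∫ Y, Real.exp (-⟪η, (Y : EuclideanSpace ℝ (Fin (n - 1)))⟫ ^ 2 / (4 * c * α Y))
                ∂((volume : Measure (EuclideanSpace ℝ (Fin (n - 1)))).toSphere)) ≤ c₂
        ∧ (1 ≤ ‖η‖ →
            c₃ ≤ ‖η‖ * ∫ Y, Real.exp
                (-⟪η, (Y : EuclideanSpace ℝ (Fin (n - 1)))⟫ ^ 2 / (4 * c * α Y))
                ∂((volume : Measure (EuclideanSpace ℝ (Fin (n - 1)))).toSphere)) := by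
  have hm : 2 ≤ n - 1 := by omega
  set σ := (volume : Measure (EuclideanSpace ℝ (Fin (n - 1)))).toSphere with hσ
  set ε : ℝ := Real.exp (-(4 * c * C₀)⁻¹) with hε
  have hε0 : 0 < ε := Real.exp_pos _
  have hM0 : (0:ℝ) < ((n-1:ℕ):ℝ) - 1 := by
    have : (2:ℝ) ≤ ((n-1:ℕ):ℝ) := by exact_mod_cast hm
    linarith
  set κ : ℝ := ((n-1:ℕ):ℝ) * ((20 * Real.sqrt (((n-1:ℕ):ℝ) - 1))⁻¹) ^ (n - 1 - 1) with hκ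
  have hκ0 : 0 < κ := by
    have h1 : (0:ℝ) < Real.sqrt (((n-1:ℕ):ℝ) - 1) := Real.sqrt_pos.2 hM0
    have h2 : (0:ℝ) < ((n-1:ℕ):ℝ) := by linarith
    positivity
  -- denominators
  have hden : ∀ Y : Metric.sphere (0 : EuclideanSpace ℝ (Fin (n - 1))) 1,
      4 * c * C₀ ≤ 4 * c * α Y := fun Y =>
    mul_le_mul_of_nonneg_left (hαC Y) (by positivity)
  have hden0 : ∀ Y, (0:ℝ) < 4 * c * α Y := fun Y => lt_of_lt_of_le (by positivity) (hden Y)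
  -- integrand
  have hcont : ∀ η : EuclideanSpace ℝ (Fin (n - 1)), Continuous fun Y :
      Metric.sphere (0 : EuclideanSpace ℝ (Fin (n - 1))) 1 =>
      Real.exp (-⟪η, (Y : EuclideanSpace ℝ (Fin (n - 1)))⟫ ^ 2 / (4 * c * α Y)) := by
    intro η
    refine Real.continuous_exp.comp (Continuous.div ?_ (continuous_const.mul hα)
      fun Y => (hden0 Y).ne')
    exact (((innerSL ℝ η).continuous.comp continuous_subtype_val).pow 2).neg
  have hint : ∀ η : EuclideanSpace ℝ (Fin (n - 1)), Integrable (fun Y :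
      Metric.sphere (0 : EuclideanSpace ℝ (Fin (n - 1))) 1 =>
      Real.exp (-⟪η, (Y : EuclideanSpace ℝ (Fin (n - 1)))⟫ ^ 2 / (4 * c * α Y))) σ := by
    intro η
    rw [← integrableOn_univ]
    exact (hcont η).continuousOn.integrableOn_compact isCompact_univ
  have hle1 : ∀ (η : EuclideanSpace ℝ (Fin (n - 1)))
      (Y : Metric.sphere (0 : EuclideanSpace ℝ (Fin (n - 1))) 1),
      Real.exp (-⟪η, (Y : EuclideanSpace ℝ (Fin (n - 1)))⟫ ^ 2 / (4 * c * α Y)) ≤ 1 := by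
    intro η Y
    rw [Real.exp_le_one_iff]
    exact div_nonpos_iff.2 (Or.inr ⟨neg_nonpos.2 (sq_nonneg _), (hden0 Y).le⟩)
  -- pointwise lower bound when the inner product is small
  have hlb : ∀ (η : EuclideanSpace ℝ (Fin (n - 1)))
      (Y : Metric.sphere (0 : EuclideanSpace ℝ (Fin (n - 1))) 1),
      ⟪η, (Y : EuclideanSpace ℝ (Fin (n - 1)))⟫ ^ 2 ≤ 1 →
      ε ≤ Real.exp (-⟪η, (Y : EuclideanSpace ℝ (Fin (n - 1)))⟫ ^ 2 / (4 * c * α Y)) := by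
    intro η Y hY
    rw [hε]
    apply Real.exp_le_exp.2
    rw [neg_div, neg_le_neg_iff, inv_eq_one_div]
    exact div_le_div₀ zero_le_one hY (by positivity) (hden Y)
  have hσfin : σ Set.univ ≠ ⊤ := measure_ne_top σ _
  have hσ0 : (0:ℝ) < (σ Set.univ).toReal := by
    refine ENNReal.toReal_pos ?_ hσfin
    rw [hσ, Measure.toSphere_apply_univ]
    refine mul_ne_zero ?_ (measure_ball_pos volume 0 one_pos).ne'
    simp only [finrank_euclideanSpace_fin]
    exact_mod_cast (by omega : n - 1 ≠ 0)
  -- upper bound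
  have hupper : ∀ η : EuclideanSpace ℝ (Fin (n - 1)),
      (∫ Y, Real.exp (-⟪η, (Y : EuclideanSpace ℝ (Fin (n - 1)))⟫ ^ 2 / (4 * c * α Y)) ∂σ)
        ≤ (σ Set.univ).toReal := by
    intro η
    calc (∫ Y, Real.exp (-⟪η, (Y : EuclideanSpace ℝ (Fin (n - 1)))⟫ ^ 2 / (4 * c * α Y)) ∂σ)
        ≤ ∫ _, (1:ℝ) ∂σ := integral_mono (hint η) (integrable_const 1) (hle1 η)
      _ = (σ Set.univ).toReal := by rw [integral_const, smul_eq_mul, mul_one, measureReal_def]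
  -- global lower bound for small η
  have hglobal : ∀ η : EuclideanSpace ℝ (Fin (n - 1)), ‖η‖ ≤ 1 →
      ε * (σ Set.univ).toReal
        ≤ ∫ Y, Real.exp (-⟪η, (Y : EuclideanSpace ℝ (Fin (n - 1)))⟫ ^ 2 / (4 * c * α Y)) ∂σ := by
    intro η hη
    have hpt : ∀ Y : Metric.sphere (0 : EuclideanSpace ℝ (Fin (n - 1))) 1,
        ε ≤ Real.exp (-⟪η, (Y : EuclideanSpace ℝ (Fin (n - 1)))⟫ ^ 2 / (4 * c * α Y)) := by
      intro Y
      refine hlb η Y ?_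
      have h1 : |⟪η, (Y : EuclideanSpace ℝ (Fin (n - 1)))⟫| ≤ 1 := by
        have h2 := abs_real_inner_le_norm η (Y : EuclideanSpace ℝ (Fin (n - 1)))
        have h3 : ‖(Y : EuclideanSpace ℝ (Fin (n - 1)))‖ = 1 :=
          mem_sphere_zero_iff_norm.1 Y.2
        rw [h3, mul_one] at h2
        exact h2.trans hη
      calc ⟪η, (Y : EuclideanSpace ℝ (Fin (n - 1)))⟫ ^ 2
          = |⟪η, (Y : EuclideanSpace ℝ (Fin (n - 1)))⟫| ^ 2 := (sq_abs _).symm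
        _ ≤ 1 := pow_le_one₀ (abs_nonneg _) h1
    calc ε * (σ Set.univ).toReal = ∫ _, ε ∂σ := by
          rw [integral_const, smul_eq_mul, mul_comm, measureReal_def]
      _ ≤ _ := integral_mono (integrable_const ε) (hint η) hpt
  -- band lower bound for large η
  have hband : ∀ η : EuclideanSpace ℝ (Fin (n - 1)), 1 ≤ ‖η‖ →
      ε * κ * ‖η‖⁻¹
        ≤ ∫ Y, Real.exp (-⟪η, (Y : EuclideanSpace ℝ (Fin (n - 1)))⟫ ^ 2 / (4 * c * α Y)) ∂σ := by
    intro η hη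
    have hη0 : (0:ℝ) < ‖η‖ := lt_of_lt_of_le one_pos hη
    have hηne : ‖η‖ ≠ 0 := hη0.ne'
    set e : EuclideanSpace ℝ (Fin (n - 1)) := ‖η‖⁻¹ • η with he
    have hnorme : ‖e‖ = 1 := by
      rw [he, norm_smul, norm_inv, norm_norm, inv_mul_cancel₀ hηne]
    set δ : ℝ := ‖η‖⁻¹ with hδ
    have hδ0 : 0 < δ := by positivity
    have hδ1 : δ ≤ 1 := by
      rw [hδ, inv_le_one_iff₀]; right; exact hη
    have hbandmeas : MeasurableSet {Y : Metric.sphere (0 : EuclideanSpace ℝ (Fin (n-1))) 1 |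
        |⟪e, (Y : EuclideanSpace ℝ (Fin (n-1)))⟫| ≤ δ} := by
      refine IsClosed.measurableSet (isClosed_le ?_ continuous_const)
      exact continuous_abs.comp ((innerSL ℝ e).continuous.comp continuous_subtype_val)
    have hA := band_toSphere_lower (n-1) hm e hnorme δ hδ0 hδ1
    have hAtoReal : κ * δ ≤ (σ {Y : Metric.sphere (0 : EuclideanSpace ℝ (Fin (n-1))) 1 |
        |⟪e, (Y : EuclideanSpace ℝ (Fin (n-1)))⟫| ≤ δ}).toReal := by
      rw [← ENNReal.ofReal_le_iff_le_toReal (measure_ne_top σ _)]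
      exact hA
    have hpt : ∀ Y ∈ {Y : Metric.sphere (0 : EuclideanSpace ℝ (Fin (n-1))) 1 |
        |⟪e, (Y : EuclideanSpace ℝ (Fin (n-1)))⟫| ≤ δ},
        ε ≤ Real.exp (-⟪η, (Y : EuclideanSpace ℝ (Fin (n - 1)))⟫ ^ 2 / (4 * c * α Y)) := by
      intro Y hY
      refine hlb η Y ?_
      simp only [Set.mem_setOf_eq] at hY
      rw [he, real_inner_smul_left, abs_mul, abs_of_nonneg (by positivity : (0:ℝ) ≤ ‖η‖⁻¹)] at hY
      have h1 : |⟪η, (Y : EuclideanSpace ℝ (Fin (n - 1)))⟫| ≤ 1 := by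
        have := mul_le_mul_of_nonneg_left hY hη0.le
        rw [← mul_assoc, mul_inv_cancel₀ hηne, one_mul] at this
        exact this
      calc ⟪η, (Y : EuclideanSpace ℝ (Fin (n - 1)))⟫ ^ 2
          = |⟪η, (Y : EuclideanSpace ℝ (Fin (n - 1)))⟫| ^ 2 := (sq_abs _).symm
        _ ≤ 1 := pow_le_one₀ (abs_nonneg _) h1
    calc ε * κ * ‖η‖⁻¹ = κ * δ * ε := by rw [hδ]; ring
      _ ≤ (σ {Y : Metric.sphere (0 : EuclideanSpace ℝ (Fin (n-1))) 1 |
            |⟪e, (Y : EuclideanSpace ℝ (Fin (n-1)))⟫| ≤ δ}).toReal * ε :=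
          mul_le_mul_of_nonneg_right hAtoReal hε0.le
      _ = ∫ _ in {Y : Metric.sphere (0 : EuclideanSpace ℝ (Fin (n-1))) 1 |
            |⟪e, (Y : EuclideanSpace ℝ (Fin (n-1)))⟫| ≤ δ}, ε ∂σ := by
          rw [setIntegral_const, smul_eq_mul, measureReal_def]
      _ ≤ ∫ Y in {Y : Metric.sphere (0 : EuclideanSpace ℝ (Fin (n-1))) 1 |
            |⟪e, (Y : EuclideanSpace ℝ (Fin (n-1)))⟫| ≤ δ},
            Real.exp (-⟪η, (Y : EuclideanSpace ℝ (Fin (n - 1)))⟫ ^ 2 / (4 * c * α Y)) ∂σ :=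
          setIntegral_mono_on (integrable_const ε).integrableOn
            ((hint η).integrableOn) hbandmeas hpt
      _ ≤ _ := setIntegral_le_integral (hint η)
            (Filter.Eventually.of_forall fun Y => le_of_lt (Real.exp_pos _))
  -- assemble
  refine ⟨min (ε * (σ Set.univ).toReal) (ε * κ), (σ Set.univ).toReal, ε * κ,
    lt_min (by positivity) (by positivity), hσ0, by positivity, fun η => ?_⟩
  have hsq1 : (1:ℝ) ≤ Real.sqrt (1 + ‖η‖ ^ 2) := by
    have h := Real.sqrt_le_sqrt (show (1:ℝ) ≤ 1 + ‖η‖ ^ 2 by nlinarith [sq_nonneg ‖η‖])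
    rwa [Real.sqrt_one] at h
  have hsqpos : (0:ℝ) < Real.sqrt (1 + ‖η‖ ^ 2) := lt_of_lt_of_le one_pos hsq1
  refine ⟨?_, hupper η, fun hη => ?_⟩
  · rcases le_total ‖η‖ 1 with hle | hge
    · calc min (ε * (σ Set.univ).toReal) (ε * κ) * (Real.sqrt (1 + ‖η‖ ^ 2))⁻¹
          ≤ min (ε * (σ Set.univ).toReal) (ε * κ) * 1 := by
            refine mul_le_mul_of_nonneg_left ?_ (le_min (by positivity) (by positivity))
            rw [inv_le_one_iff₀]; right; exact hsq1
        _ ≤ ε * (σ Set.univ).toReal := by rw [mul_one]; exact min_le_left _ _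
        _ ≤ _ := hglobal η hle
    · have hη0 : (0:ℝ) < ‖η‖ := lt_of_lt_of_le one_pos hge
      calc min (ε * (σ Set.univ).toReal) (ε * κ) * (Real.sqrt (1 + ‖η‖ ^ 2))⁻¹
          ≤ (ε * κ) * ‖η‖⁻¹ := by
            refine mul_le_mul (min_le_right _ _) ?_ (by positivity)
              (by positivity)
            refine inv_anti₀ hη0 ?_
            have h := Real.sqrt_le_sqrt (show ‖η‖ ^ 2 ≤ 1 + ‖η‖ ^ 2 by linarith)
            rwa [Real.sqrt_sq (norm_nonneg η)] at h
        _ ≤ _ := hband η hge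
  · have hη0 : (0:ℝ) < ‖η‖ := lt_of_lt_of_le one_pos hη
    have := mul_le_mul_of_nonneg_left (hband η hη) hη0.le
    calc ε * κ = ‖η‖ * (ε * κ * ‖η‖⁻¹) := by
          field_simp
      _ ≤ _ := this
end
end

section
/- For ϝ > 0, n ≥ 3, and a continuous function α : S^{n−2} → [C₀, ∞) with C₀ > 0, the function (ξ, η) ∈ ℝ × ℝ^{n−1} ↦ ∫_{S^{n−2}} ⟨ξ⟩_ϝ^{−1} exp(−|η·Ŷ|²/(4 b(ξ) α(Ŷ))) dŶ, where ⟨ξ⟩_ϝ = (ξ² + ϝ²)^{1/2} and b(ξ) = ϝ^{−1}(ξ² + ϝ²)/2, admits a lower bound c ⟨(ξ, η)⟩^{−1} with c > 0 depending only on n, ϝ, C₀ and an upper bound for α; here ⟨(ξ,η)⟩ = (1 + ξ² + |η|²)^{1/2}. -/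
noncomputable section

open MeasureTheory
open scoped RealInnerProductSpace ENNReal

open Set Metric in
open scoped Pointwise in
/-- Lower bound, linear in `t`, for the `toSphere` measure of the band
`{Y ∈ S^{m-1} : |⟪e,Y⟫| ≤ t}` around the equator orthogonal to a unit vector `e`. -/
lemma band_measure_lb (m : ℕ) (hm : 2 ≤ m) :
    ∃ κ : ℝ, 0 < κ ∧ ∀ (e : EuclideanSpace ℝ (Fin m)), ‖e‖ = 1 → ∀ t : ℝ, 0 < t → t ≤ 1 →
      ENNReal.ofReal (κ * t) ≤
        (volume : Measure (EuclideanSpace ℝ (Fin m))).toSphere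
          {Y : sphere (0 : EuclideanSpace ℝ (Fin m)) 1 |
            |⟪e, (Y : EuclideanSpace ℝ (Fin m))⟫| ≤ t} := by
  set r : ℝ := (m : ℝ)⁻¹ with hr_def
  have hm0 : (0 : ℝ) < m := by positivity
  have hr : 0 < r := by positivity
  refine ⟨m * (r * (r / 2) ^ (m - 1)), by positivity, ?_⟩
  intro e he t ht0 ht1
  set S : Set (sphere (0 : EuclideanSpace ℝ (Fin m)) 1) :=
    {Y : sphere (0 : EuclideanSpace ℝ (Fin m)) 1 |
      |⟪e, (Y : EuclideanSpace ℝ (Fin m))⟫| ≤ t} with hS_def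
  have hSmeas : MeasurableSet S :=
    (isClosed_le ((continuous_const.inner continuous_subtype_val).abs)
      continuous_const).measurableSet
  -- orthonormal basis with `b i0 = e`
  set i0 : Fin m := ⟨0, by omega⟩ with hi0_def
  set i1 : Fin m := ⟨1, by omega⟩ with hi1_def
  have hcard : Module.finrank ℝ (EuclideanSpace ℝ (Fin m)) = Fintype.card (Fin m) := by
    simp [finrank_euclideanSpace_fin]
  have hortho : Orthonormal ℝ
      (({i0} : Set (Fin m)).restrict (fun _ : Fin m => e)) := by
    constructor
    · intro i; exact he
    · intro i j hij
      exact absurd (Subsingleton.elim i j) hij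
  obtain ⟨b, hb⟩ := hortho.exists_orthonormalBasis_extension_of_card_eq hcard
  have hb0 : b i0 = e := hb i0 rfl
  -- the box
  set ss : Fin m → Set ℝ := fun i => if i = i0 then Icc (-(t*r/2)) (t*r/2) else Icc (r/2) r
    with hss_def
  have hssmeas : ∀ i, MeasurableSet (ss i) := fun i => by
    by_cases h : i = i0 <;> simp [hss_def, h, measurableSet_Icc]
  set P : Set (Fin m → ℝ) := Set.univ.pi ss with hP_def
  have hPmeas : MeasurableSet P := MeasurableSet.univ_pi hssmeas
  set F := (MeasurableEquiv.toLp 2 (Fin m → ℝ)).symm with hF_def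
  set B : Set (EuclideanSpace ℝ (Fin m)) := ⇑b.repr ⁻¹' (⇑F ⁻¹' P) with hB_def
  -- volume of the box
  have hvolP : (volume : Measure (Fin m → ℝ)) P
      = ENNReal.ofReal (t * r) * ENNReal.ofReal (r / 2) ^ (m - 1) := by
    rw [hP_def, volume_pi_pi]
    rw [← Finset.mul_prod_erase Finset.univ _ (Finset.mem_univ i0)]
    have hrest : ∀ i ∈ Finset.univ.erase i0, volume (ss i) = ENNReal.ofReal (r / 2) := by
      intro i hi
      have hne : i ≠ i0 := (Finset.mem_erase.mp hi).1
      have : ss i = Icc (r/2) r := by simp [hss_def, hne]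
      rw [this, Real.volume_Icc]
      congr 1; ring
    rw [Finset.prod_congr rfl hrest, Finset.prod_const,
      Finset.card_erase_of_mem (Finset.mem_univ i0), Finset.card_univ, Fintype.card_fin]
    have : ss i0 = Icc (-(t*r/2)) (t*r/2) := by simp [hss_def]
    rw [this, Real.volume_Icc]
    congr 2; ring
  have hvolB : volume B = ENNReal.ofReal (t * r) * ENNReal.ofReal (r / 2) ^ (m - 1) := by
    have h1 : volume B = volume (⇑F ⁻¹' P) :=
      b.measurePreserving_repr.measure_preimage
        ((F.measurable hPmeas).nullMeasurableSet)
    have h2 : volume (⇑F ⁻¹' P) = (volume : Measure (Fin m → ℝ)) P :=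
      (EuclideanSpace.volume_preserving_symm_measurableEquiv_toLp (Fin m)).measure_preimage
        hPmeas.nullMeasurableSet
    rw [h1, h2, hvolP]
  -- box is inside the cone over the band
  have hsub : B ⊆ Ioo (0:ℝ) 1 • (Subtype.val '' S) := by
    intro x hx
    have hx' : ∀ i, b.repr x i ∈ ss i := by
      intro i
      exact hx i (Set.mem_univ i)
    have hrepr : ∀ i, b.repr x i = ⟪b i, x⟫ := fun i => b.repr_apply_apply x i
    have h0 : |⟪e, x⟫| ≤ t * r / 2 := by
      have h : -(t*r/2) ≤ b.repr x i0 ∧ b.repr x i0 ≤ t*r/2 := by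
        simpa [hss_def, Set.mem_Icc] using hx' i0
      rw [← hb0, ← hrepr i0]
      exact abs_le.2 ⟨by linarith [h.1], by linarith [h.2]⟩
    have h1 : r / 2 ≤ ⟪b i1, x⟫ ∧ ⟪b i1, x⟫ ≤ r := by
      have hne : i1 ≠ i0 := by simp [hi0_def, hi1_def, Fin.ext_iff]
      have h : r/2 ≤ b.repr x i1 ∧ b.repr x i1 ≤ r := by
        simpa [hss_def, hne, Set.mem_Icc] using hx' i1
      rw [← hrepr i1]; exact ⟨h.1, h.2⟩
    -- each coordinate bounded by r
    have hcoord : ∀ i, (b.repr x i)^2 ≤ r^2 := by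
      intro i
      by_cases hii : i = i0
      · have h : -(t*r/2) ≤ b.repr x i ∧ b.repr x i ≤ t*r/2 := by
          simpa [hss_def, hii, Set.mem_Icc] using hx' i
        have htr : t * r ≤ r := by nlinarith [mul_nonneg (sub_nonneg.2 ht1) hr.le]
        exact sq_le_sq' (by linarith [h.1]) (by linarith [h.2])
      · have h : r/2 ≤ b.repr x i ∧ b.repr x i ≤ r := by
          simpa [hss_def, hii, Set.mem_Icc] using hx' i
        exact sq_le_sq' (by linarith [h.1]) h.2
    -- norm bounds
    have hnormsq : ‖x‖^2 = ∑ i, (b.repr x i)^2 := by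
      rw [← b.repr.norm_map x, EuclideanSpace.norm_eq, Real.sq_sqrt (by positivity)]
      exact Finset.sum_congr rfl fun i _ => by rw [Real.norm_eq_abs, sq_abs]
    have hup : ‖x‖ < 1 := by
      have hsum : ∑ i, (b.repr x i)^2 ≤ (m : ℝ) * r^2 := by
        calc ∑ i, (b.repr x i)^2 ≤ ∑ _i : Fin m, r^2 :=
              Finset.sum_le_sum fun i _ => hcoord i
          _ = (m : ℝ) * r^2 := by
              rw [Finset.sum_const, Finset.card_univ, Fintype.card_fin, nsmul_eq_mul]
      have hmr : (m : ℝ) * r^2 = r := by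
        rw [hr_def]; field_simp
      have hx2 : ‖x‖^2 ≤ r := by rw [hnormsq]; linarith
      have hrle : r ≤ (2:ℝ)⁻¹ := by
        rw [hr_def, inv_le_inv₀ hm0 (by norm_num)]
        exact_mod_cast hm
      nlinarith [norm_nonneg x]
    have hlo : r / 2 ≤ ‖x‖ := by
      have h := abs_real_inner_le_norm (b i1) x
      rw [b.orthonormal.1 i1, one_mul] at h
      calc r/2 ≤ ⟪b i1, x⟫ := h1.1
        _ ≤ |⟪b i1, x⟫| := le_abs_self _
        _ ≤ ‖x‖ := h
    have hxpos : 0 < ‖x‖ := lt_of_lt_of_le (by positivity) hlo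
    have hxne : ‖x‖ ≠ 0 := ne_of_gt hxpos
    -- construct the sphere point
    have hYnorm : ‖(‖x‖⁻¹ • x : EuclideanSpace ℝ (Fin m))‖ = 1 := by
      rw [norm_smul, norm_inv, norm_norm, inv_mul_cancel₀ hxne]
    refine ⟨‖x‖, ⟨hxpos, hup⟩, ‖x‖⁻¹ • x,
      ⟨⟨‖x‖⁻¹ • x, mem_sphere_zero_iff_norm.2 hYnorm⟩, ?_, rfl⟩, smul_inv_smul₀ hxne x⟩
    -- band membership
    rw [hS_def]
    simp only [Set.mem_setOf_eq]
    rw [real_inner_smul_right, abs_mul, abs_inv, abs_norm, inv_mul_le_iff₀ hxpos]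
    calc |⟪e, x⟫| ≤ t * r / 2 := h0
      _ ≤ ‖x‖ * t := by nlinarith
  -- conclude
  have key := (volume : Measure (EuclideanSpace ℝ (Fin m))).toSphere_apply' hSmeas
  have hdim : Module.finrank ℝ (EuclideanSpace ℝ (Fin m)) = m := by
    simp [finrank_euclideanSpace_fin]
  rw [key, hdim]
  calc ENNReal.ofReal (↑m * (r * (r / 2) ^ (m - 1)) * t)
      = (m : ℝ≥0∞) * (ENNReal.ofReal (t * r) * ENNReal.ofReal (r / 2) ^ (m - 1)) := by
        rw [← ENNReal.ofReal_pow (by positivity), ← ENNReal.ofReal_mul (by positivity),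
          ← ENNReal.ofReal_natCast m, ← ENNReal.ofReal_mul (by positivity)]
        congr 1 <;> ring
    _ = (m : ℝ≥0∞) * volume B := by rw [hvolB]
    _ ≤ (m : ℝ≥0∞) * volume (Ioo (0:ℝ) 1 • (Subtype.val '' S)) := by
        exact mul_le_mul_right (measure_mono hsub) _

set_option maxHeartbeats 1000000 in
/-- Elliptic lower bound for the boundary principal symbol of the conjugated normal operator
`A_ϝ`: for `ϝ > 0`, `n ≥ 3` and a continuous `α : S^{n−2} → [C₀, C₁]` with `C₀ > 0`, the
function
`(ξ, η) ↦ ∫_{S^{n−2}} ⟨ξ⟩_ϝ⁻¹ exp(−|η·Y|²/(4 b(ξ) α(Y))) dY`,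
with `⟨ξ⟩_ϝ = (ξ² + ϝ²)^{1/2}` and `b(ξ) = ϝ⁻¹(ξ² + ϝ²)/2`, is bounded below by
`c ⟨(ξ,η)⟩⁻¹` with `c > 0` depending only on `n`, `ϝ`, `C₀` and the upper bound `C₁` of `α`. -/
theorem boundary_symbol_elliptic_lower_bound (n : ℕ) (hn : 3 ≤ n) (ϝ C₀ C₁ : ℝ)
    (hϝ : 0 < ϝ) (hC₀ : 0 < C₀)
    (α : Metric.sphere (0 : EuclideanSpace ℝ (Fin (n - 1))) 1 → ℝ)
    (hα : Continuous α) (hαl : ∀ Y, C₀ ≤ α Y) (hαu : ∀ Y, α Y ≤ C₁) :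
    ∃ c : ℝ, 0 < c ∧ ∀ (ξ : ℝ) (η : EuclideanSpace ℝ (Fin (n - 1))),
      c * (Real.sqrt (1 + ξ ^ 2 + ‖η‖ ^ 2))⁻¹
        ≤ ∫ Y, (Real.sqrt (ξ ^ 2 + ϝ ^ 2))⁻¹ *
            Real.exp (-⟪η, (Y : EuclideanSpace ℝ (Fin (n - 1)))⟫ ^ 2 /
              (4 * (ϝ⁻¹ * (ξ ^ 2 + ϝ ^ 2) / 2) * α Y))
            ∂((volume : Measure (EuclideanSpace ℝ (Fin (n - 1)))).toSphere) := by
  obtain ⟨κ, hκ, hband⟩ := band_measure_lb (n - 1) (by omega)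
  set K : ℝ := Real.sqrt (2 * C₀ / ϝ) with hK_def
  have hKpos : 0 < K := Real.sqrt_pos.2 (by positivity)
  set A : ℝ := max ϝ 1 with hA_def
  have hApos : 0 < A := lt_of_lt_of_le one_pos (le_max_right _ _)
  set L : ℝ := max A K⁻¹ with hL_def
  have hLpos : 0 < L := lt_of_lt_of_le hApos (le_max_left _ _)
  refine ⟨Real.exp (-1) * κ / L, by positivity, ?_⟩
  intro ξ η
  set q : ℝ := Real.sqrt (ξ ^ 2 + ϝ ^ 2) with hq_def
  have hqpos : 0 < q := Real.sqrt_pos.2 (by positivity)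
  have hq2 : q ^ 2 = ξ ^ 2 + ϝ ^ 2 := Real.sq_sqrt (by positivity)
  set W : ℝ := Real.sqrt (1 + ξ ^ 2 + ‖η‖ ^ 2) with hW_def
  have hWpos : 0 < W := Real.sqrt_pos.2 (by positivity)
  have hW2 : W ^ 2 = 1 + ξ ^ 2 + ‖η‖ ^ 2 := Real.sq_sqrt (by positivity)
  set M₁ : ℝ := max ‖η‖ 1 with hM₁_def
  have hM₁pos : 0 < M₁ := lt_of_lt_of_le one_pos (le_max_right _ _)
  set t : ℝ := min 1 (K * q / M₁) with ht_def
  have ht0 : 0 < t := lt_min one_pos (by positivity)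
  have ht1 : t ≤ 1 := min_le_left _ _
  -- unit vector in the direction of η
  obtain ⟨e, he1, hee⟩ : ∃ e : EuclideanSpace ℝ (Fin (n - 1)), ‖e‖ = 1 ∧
      ∀ Y : EuclideanSpace ℝ (Fin (n - 1)), ⟪η, Y⟫ = ‖η‖ * ⟪e, Y⟫ := by
    by_cases hη : η = 0
    · refine ⟨EuclideanSpace.single ⟨0, by omega⟩ 1, ?_, ?_⟩
      · rw [EuclideanSpace.norm_single]; norm_num
      · intro Y; simp [hη]
    · have hn0 : ‖η‖ ≠ 0 := norm_ne_zero_iff.2 hη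
      refine ⟨‖η‖⁻¹ • η, ?_, ?_⟩
      · rw [norm_smul, norm_inv, norm_norm, inv_mul_cancel₀ hn0]
      · intro Y
        rw [real_inner_smul_left]
        field_simp
  set S : Set (Metric.sphere (0 : EuclideanSpace ℝ (Fin (n - 1))) 1) :=
    {Y : Metric.sphere (0 : EuclideanSpace ℝ (Fin (n - 1))) 1 |
      |⟪e, (Y : EuclideanSpace ℝ (Fin (n - 1)))⟫| ≤ t} with hS_def
  have hSmeas : MeasurableSet S :=
    (isClosed_le ((continuous_const.inner continuous_subtype_val).abs)
      continuous_const).measurableSet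
  have hbandS := hband e he1 t ht0 ht1
  -- basic bounds on t
  have htη : t * ‖η‖ ≤ K * q := by
    have h1 : t ≤ K * q / M₁ := min_le_right _ _
    have h2 : ‖η‖ ≤ M₁ := le_max_left _ _
    calc t * ‖η‖ ≤ (K * q / M₁) * M₁ :=
          mul_le_mul h1 h2 (norm_nonneg _) (by positivity)
      _ = K * q := div_mul_cancel₀ _ (ne_of_gt hM₁pos)
  -- the integrand
  set b0 : ℝ := ϝ⁻¹ * (ξ ^ 2 + ϝ ^ 2) / 2 with hb0_def
  have hb0pos : 0 < b0 := by positivity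
  set f : Metric.sphere (0 : EuclideanSpace ℝ (Fin (n - 1))) 1 → ℝ :=
    fun Y => q⁻¹ * Real.exp (-⟪η, (Y : EuclideanSpace ℝ (Fin (n - 1)))⟫ ^ 2 /
      (4 * b0 * α Y)) with hf_def
  have hαpos : ∀ Y, 0 < α Y := fun Y => lt_of_lt_of_le hC₀ (hαl Y)
  have hdenpos : ∀ Y, 0 < 4 * b0 * α Y := fun Y => by
    have := hαpos Y; positivity
  have hfc : Continuous f := by
    apply continuous_const.mul
    apply Real.continuous_exp.comp
    apply Continuous.div
    · exact (((continuous_const.inner continuous_subtype_val).pow 2).neg)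
    · exact (continuous_const.mul hα)
    · exact fun Y => ne_of_gt (hdenpos Y)
  have hfnonneg : ∀ Y, 0 ≤ f Y := fun Y => by positivity
  have hfle : ∀ Y, f Y ≤ q⁻¹ := by
    intro Y
    rw [hf_def]
    have : Real.exp (-⟪η, (Y : EuclideanSpace ℝ (Fin (n - 1)))⟫ ^ 2 / (4 * b0 * α Y)) ≤ 1 := by
      rw [Real.exp_le_one_iff]
      apply div_nonpos_of_nonpos_of_nonneg
      · simp [sq_nonneg]
      · exact (hdenpos Y).le
    calc q⁻¹ * Real.exp _ ≤ q⁻¹ * 1 := by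
          exact mul_le_mul_of_nonneg_left this (by positivity)
      _ = q⁻¹ := mul_one _
  have hfi : Integrable f
      ((volume : Measure (EuclideanSpace ℝ (Fin (n - 1)))).toSphere) := by
    refine Integrable.mono' (integrable_const q⁻¹) hfc.aestronglyMeasurable
      (ae_of_all _ fun Y => ?_)
    rw [Real.norm_eq_abs, abs_of_nonneg (hfnonneg Y)]
    exact hfle Y
  -- lower bound on the band
  have hlow : ∀ Y ∈ S, q⁻¹ * Real.exp (-1) ≤ f Y := by
    intro Y hY
    have hYt : |⟪e, (Y : EuclideanSpace ℝ (Fin (n - 1)))⟫| ≤ t := hY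
    have hinner : ⟪η, (Y : EuclideanSpace ℝ (Fin (n - 1)))⟫ ^ 2 ≤ 4 * b0 * C₀ := by
      have h1 : ⟪η, (Y : EuclideanSpace ℝ (Fin (n - 1)))⟫ ^ 2
          = ‖η‖ ^ 2 * ⟪e, (Y : EuclideanSpace ℝ (Fin (n - 1)))⟫ ^ 2 := by
        rw [hee]; ring
      have h2 : ⟪e, (Y : EuclideanSpace ℝ (Fin (n - 1)))⟫ ^ 2 ≤ t ^ 2 := by
        have := abs_le.mp hYt
        exact sq_le_sq' (by linarith [this.1]) this.2
      have h3 : ‖η‖ ^ 2 * t ^ 2 ≤ (K * q) ^ 2 := by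
        have h4 : (t * ‖η‖) ^ 2 ≤ (K * q) ^ 2 := by
          apply sq_le_sq'
          · nlinarith [mul_nonneg ht0.le (norm_nonneg η), mul_pos hKpos hqpos]
          · exact htη
        nlinarith [h4]
      have h5 : (K * q) ^ 2 = 4 * b0 * C₀ := by
        have hK2 : K ^ 2 = 2 * C₀ / ϝ := Real.sq_sqrt (by positivity)
        have : (K * q) ^ 2 = K ^ 2 * q ^ 2 := by ring
        rw [this, hK2, hq2, hb0_def]
        field_simp
        ring
      calc ⟪η, (Y : EuclideanSpace ℝ (Fin (n - 1)))⟫ ^ 2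
          = ‖η‖ ^ 2 * ⟪e, (Y : EuclideanSpace ℝ (Fin (n - 1)))⟫ ^ 2 := h1
        _ ≤ ‖η‖ ^ 2 * t ^ 2 := mul_le_mul_of_nonneg_left h2 (sq_nonneg _)
        _ ≤ (K * q) ^ 2 := h3
        _ = 4 * b0 * C₀ := h5
    have hratio : ⟪η, (Y : EuclideanSpace ℝ (Fin (n - 1)))⟫ ^ 2 / (4 * b0 * α Y) ≤ 1 := by
      rw [div_le_one (hdenpos Y)]
      calc ⟪η, (Y : EuclideanSpace ℝ (Fin (n - 1)))⟫ ^ 2 ≤ 4 * b0 * C₀ := hinner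
        _ ≤ 4 * b0 * α Y := by
            apply mul_le_mul_of_nonneg_left (hαl Y) (by positivity)
    rw [hf_def]
    apply mul_le_mul_of_nonneg_left _ (by positivity : (0:ℝ) ≤ q⁻¹)
    apply Real.exp_le_exp.2
    rw [neg_div]
    linarith
  -- measure lower bound
  have hμS : ((volume : Measure (EuclideanSpace ℝ (Fin (n - 1)))).toSphere S) ≠ ⊤ :=
    measure_ne_top _ _
  have hμSreal : κ * t ≤
      ((volume : Measure (EuclideanSpace ℝ (Fin (n - 1)))).toSphere S).toReal := by
    have := ENNReal.toReal_mono hμS hbandS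
    rwa [ENNReal.toReal_ofReal (by positivity)] at this
  -- the key scalar inequality : q ≤ L * W * t
  have hqAW : q ≤ A * W := by
    have h1 : ξ ^ 2 + ϝ ^ 2 ≤ (A * W) ^ 2 := by
      have hAϝ : ϝ ≤ A := le_max_left _ _
      have hA1 : 1 ≤ A := le_max_right _ _
      have : (A * W) ^ 2 = A ^ 2 * W ^ 2 := by ring
      rw [this, hW2]
      have hA2 : 1 ≤ A ^ 2 := by nlinarith
      have hAϝ2 : ϝ ^ 2 ≤ A ^ 2 := by nlinarith
      nlinarith [mul_nonneg (sub_nonneg.2 hA2) (sq_nonneg ξ),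
        mul_nonneg (sq_nonneg A) (sq_nonneg ‖η‖)]
    calc q = Real.sqrt (ξ ^ 2 + ϝ ^ 2) := hq_def
      _ ≤ Real.sqrt ((A * W) ^ 2) := Real.sqrt_le_sqrt h1
      _ = A * W := Real.sqrt_sq (by positivity)
  have hM₁W : M₁ ≤ W := by
    have h1 : M₁ ^ 2 ≤ W ^ 2 := by
      rw [hW2]
      rcases max_cases ‖η‖ 1 with ⟨h, _⟩ | ⟨h, _⟩ <;> rw [hM₁_def, h] <;>
        nlinarith [sq_nonneg ξ, sq_nonneg ‖η‖]
    calc M₁ = Real.sqrt (M₁ ^ 2) := (Real.sqrt_sq hM₁pos.le).symm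
      _ ≤ Real.sqrt (W ^ 2) := Real.sqrt_le_sqrt h1
      _ = W := Real.sqrt_sq hWpos.le
  have hkey : q ≤ L * W * t := by
    rcases min_cases 1 (K * q / M₁) with ⟨hmin, _⟩ | ⟨hmin, hlt⟩
    · -- t = 1
      rw [ht_def, hmin, mul_one]
      calc q ≤ A * W := hqAW
        _ ≤ L * W := mul_le_mul_of_nonneg_right (le_max_left _ _) hWpos.le
    · -- t = K * q / M₁
      rw [ht_def, hmin]
      have hLK : 1 ≤ L * K := by
        have : K⁻¹ ≤ L := le_max_right _ _
        calc (1:ℝ) = K⁻¹ * K := by field_simp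
          _ ≤ L * K := mul_le_mul_of_nonneg_right this hKpos.le
      have : L * W * (K * q / M₁) = (L * K * W * q) / M₁ := by ring
      rw [this, le_div_iff₀ hM₁pos]
      have hMW : M₁ ≤ L * K * W := by
        calc M₁ ≤ W := hM₁W
          _ = 1 * W := (one_mul W).symm
          _ ≤ L * K * W := mul_le_mul_of_nonneg_right hLK hWpos.le
      nlinarith [hqpos]
  -- final chain
  have harith : Real.exp (-1) * κ / L * W⁻¹ ≤ q⁻¹ * Real.exp (-1) * (κ * t) := by
    have h1 : (L * W)⁻¹ ≤ t / q := by
      rw [le_div_iff₀ hqpos, inv_mul_le_iff₀ (by positivity)]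
      exact hkey
    calc Real.exp (-1) * κ / L * W⁻¹
        = (Real.exp (-1) * κ) * (L * W)⁻¹ := by
          rw [mul_inv]; ring
      _ ≤ (Real.exp (-1) * κ) * (t / q) :=
          mul_le_mul_of_nonneg_left h1 (by positivity)
      _ = q⁻¹ * Real.exp (-1) * (κ * t) := by
          rw [div_eq_mul_inv]; ring
  calc Real.exp (-1) * κ / L * W⁻¹
      ≤ q⁻¹ * Real.exp (-1) * (κ * t) := harith
    _ ≤ q⁻¹ * Real.exp (-1) *
        ((volume : Measure (EuclideanSpace ℝ (Fin (n - 1)))).toSphere S).toReal := by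
        apply mul_le_mul_of_nonneg_left hμSreal (by positivity)
    _ ≤ ∫ Y in S, f Y ∂((volume : Measure (EuclideanSpace ℝ (Fin (n - 1)))).toSphere) :=
        setIntegral_ge_of_const_le_real hSmeas hμS hlow hfi.integrableOn
    _ ≤ ∫ Y, f Y ∂((volume : Measure (EuclideanSpace ℝ (Fin (n - 1)))).toSphere) :=
        setIntegral_le_integral hfi (ae_of_all _ hfnonneg)
end
end
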